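/- arXiv:1712.00739 — 3 statements merged into one kernel-verified Lean document; each statement's English description precedes it below -/
import Mathlib

section
/- Every flat arc in Î has a finite efficient 0-flat decomposition: there exist finitely many 0-flat arcs γ⁽¹⁾, …, γ⁽ᴺ⁾ forming a 0-flat decomposition of γ which is efficient. -/
open Set MeasureTheory ENNReal Topology

noncomputable section

namespace Tent

/-- The core interval `I = [0,1]`. -/
def I : Set ℝ := Set.Icc 0 1

/-- The core tent map of slope `s`, `f(x) = min(s·x + 2 − s, s·(1 − x))`. -/
def f (s : ℝ) (x : ℝ) : ℝ := min (s * x + 2 - s) (s * (1 - x))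

/-- The critical point `c = 1 − 1/s`. -/
def c (s : ℝ) : ℝ := 1 - 1 / s

/-- The post-critical set `PC = {c, f(c), f²(c), …}`. -/
def PC (s : ℝ) : Set ℝ := Set.range fun n => (f s)^[n] (c s)

/-- The inverse limit, as a set of sequences: `x_i ∈ I` and `f(x_{i+1}) = x_i`. -/
def IhatSet (s : ℝ) : Set (ℕ → ℝ) :=
  {x | (∀ i, x i ∈ I) ∧ ∀ i, f s (x (i + 1)) = x i}

/-- The inverse limit space `Î`. -/
abbrev Ihat (s : ℝ) : Type := ↥(IhatSet s)

/-- The metric on `Î`: `d(x,y) = Σ_i |x_i − y_i|/2^i`. -/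
def dHat (s : ℝ) (x y : Ihat s) : ℝ := ∑' i : ℕ, |x.1 i - y.1 i| / 2 ^ i

/-- The shift map on sequences: `x ↦ (f(x₀), x₀, x₁, …)`. -/
def fhatSeq (s : ℝ) (x : ℕ → ℝ) : ℕ → ℝ := fun n => Nat.casesOn n (f s (x 0)) fun k => x k

/-- The image under `f̂ⁿ` of a subset of `Î`. -/
def fhatImage (s : ℝ) (n : ℕ) (K : Set (Ihat s)) : Set (Ihat s) :=
  {y : Ihat s | ∃ x ∈ K, y.1 = (fhatSeq s)^[n] (Subtype.val x)}

/-- The inverse `f̂⁻ⁿ` of the shift homeomorphism: drop the first `n` coordinates. -/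
def fhatInv (s : ℝ) (n : ℕ) (x : Ihat s) : Ihat s :=
  ⟨fun i => x.1 (i + n), fun i => x.2.1 (i + n), fun i => by
    show f s (x.1 (i + 1 + n)) = x.1 (i + n)
    rw [show i + 1 + n = i + n + 1 from by omega]
    exact x.2.2 (i + n)⟩

/-- `γ` is an arc in `Î`: homeomorphic to a nontrivial interval of `ℝ`. -/
def IsArc (s : ℝ) (γ : Set (Ihat s)) : Prop :=
  ∃ J : Set ℝ, J.OrdConnected ∧ J.Nontrivial ∧ Nonempty (γ ≃ₜ J)

/-- `γ` is a closed arc in `Î`: homeomorphic to `[0,1]`. -/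
def IsClosedArc (s : ℝ) (γ : Set (Ihat s)) : Prop := Nonempty (γ ≃ₜ (Set.Icc (0:ℝ) 1))

/-- `γ` is an open arc in `Î`: homeomorphic to `(0,1)`. -/
def IsOpenArc (s : ℝ) (γ : Set (Ihat s)) : Prop := Nonempty (γ ≃ₜ (Set.Ioo (0:ℝ) 1))

/-- `x` is an endpoint of the closed arc `γ`. -/
def IsEndpoint (s : ℝ) (x : Ihat s) (γ : Set (Ihat s)) : Prop :=
  ∃ (e : γ ≃ₜ (Set.Icc (0:ℝ) 1)) (hx : x ∈ γ), (e ⟨x, hx⟩).1 = 0 ∨ (e ⟨x, hx⟩).1 = 1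

/-- `γ` is `m`-flat over the nontrivial interval `J ⊆ I`: the projection `π_m`
restricted to `γ` is a homeomorphism onto `J`. -/
def MFlatOver (s : ℝ) (m : ℕ) (γ : Set (Ihat s)) (J : Set ℝ) : Prop :=
  J ⊆ I ∧ J.OrdConnected ∧ J.Nontrivial ∧
    ∃ e : γ ≃ₜ J, ∀ x : γ, (e x).1 = x.1.1 m

/-- `γ` is an `m`-flat arc. -/
def IsMFlat (s : ℝ) (m : ℕ) (γ : Set (Ihat s)) : Prop := ∃ J : Set ℝ, MFlatOver s m γ J

/-- `γ` is a flat arc: `m`-flat for some `m ≥ 0`. -/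
def IsFlat (s : ℝ) (γ : Set (Ihat s)) : Prop := ∃ m : ℕ, IsMFlat s m γ

/-- `γ` is a flat closed arc. -/
def IsFlatClosedArc (s : ℝ) (γ : Set (Ihat s)) : Prop := IsClosedArc s γ ∧ IsFlat s γ

/-- `p 0, …, p k` occur in order along the closed arc `γ` (from one endpoint to the other). -/
def InOrderAlong (s : ℝ) (γ : Set (Ihat s)) (k : ℕ) (p : ℕ → Ihat s) : Prop :=
  ∃ (e : γ ≃ₜ (Set.Icc (0:ℝ) 1)) (t : ℕ → Set.Icc (0:ℝ) 1),
    (∀ i j, i ≤ j → j ≤ k → t i ≤ t j) ∧ ∀ i ≤ k, (e.symm (t i)).1 = p i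

/-- The arclength of a closed arc `γ` in the metric `d`: the supremum over finite
sequences of points occurring in order along `γ` of the sums of successive distances. -/
def arcLength (s : ℝ) (γ : Set (Ihat s)) : ℝ≥0∞ :=
  ⨆ (k : ℕ) (p : ℕ → Ihat s) (_ : InOrderAlong s γ k p),
    ENNReal.ofReal (∑ i ∈ Finset.range k, dHat s (p i) (p (i + 1)))

/-- A continuum: a compact connected subset of `Î` with more than one point. -/
def IsContinuum (s : ℝ) (K : Set (Ihat s)) : Prop :=
  IsCompact K ∧ IsConnected K ∧ K.Nontrivial

/-- `K` is `ε`-dense in `Î`. -/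
def EpsDense (s : ℝ) (ε : ℝ) (K : Set (Ihat s)) : Prop :=
  ∀ x : Ihat s, ∃ y ∈ K, dHat s x y ≤ ε

/-- `S` is metrically infinite: contains flat closed arcs of arbitrarily large length. -/
def MetricallyInfinite (s : ℝ) (S : Set (Ihat s)) : Prop :=
  ∀ N : ℝ, 0 < N → ∃ γ : Set (Ihat s), γ ⊆ S ∧ IsFlatClosedArc s γ ∧
    ENNReal.ofReal N < arcLength s γ

/-- An arc is bi-dense if, for some point `p` in it, both connected components of
`γ ∖ {p}` are dense in `Î`. -/
def BiDense (s : ℝ) (γ : Set (Ihat s)) : Prop :=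
  ∃ p ∈ γ, ∀ q ∈ γ \ {p}, Dense (connectedComponentIn (γ \ {p}) q)

/-- An arc is metrically bi-infinite if, for some point `p` in it, both connected
components of `γ ∖ {p}` are metrically infinite. -/
def MetricallyBiInfinite (s : ℝ) (γ : Set (Ihat s)) : Prop :=
  ∃ p ∈ γ, ∀ q ∈ γ \ {p}, MetricallyInfinite s (connectedComponentIn (γ \ {p}) q)

/-- `x` is globally leaf regular: its path component is a bi-dense, metrically
bi-infinite open arc. -/
def GloballyLeafRegular (s : ℝ) (x : Ihat s) : Prop :=
  IsOpenArc s (pathComponent x) ∧ BiDense s (pathComponent x) ∧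
    MetricallyBiInfinite s (pathComponent x)

/-- A `0`-box over `J`: a union of arcs, each `0`-flat over `J`. -/
def ZeroBoxOver (s : ℝ) (B : Set (Ihat s)) (J : Set ℝ) : Prop :=
  ∃ A : Set (Set (Ihat s)), (∀ γ ∈ A, MFlatOver s 0 γ J) ∧ B = ⋃₀ A

/-- An `m`-box over `J`: `f̂⁻ᵐ(B)` is a `0`-box over `J`. -/
def MBoxOver (s : ℝ) (m : ℕ) (B : Set (Ihat s)) (J : Set ℝ) : Prop :=
  ZeroBoxOver s (fhatInv s m '' B) J

/-- The maximal `m`-box over `J`: the union of all arcs `m`-flat over `J`. -/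
def maximalMBox (s : ℝ) (m : ℕ) (J : Set ℝ) : Set (Ihat s) :=
  ⋃₀ {γ : Set (Ihat s) | MFlatOver s m γ J}

/-- The point cylinder `[y₀, …, y_n]`. -/
def pointCyl (s : ℝ) (y : ℕ → ℝ) (n : ℕ) : Set (Ihat s) :=
  {z : Ihat s | ∀ i ≤ n, z.1 i = y i}

/-- A `0`-flat decomposition of `γ`: a countable collection of `0`-flat arcs,
indexed by an interval `D` of integers, covering `γ`, with consecutive pieces
meeting in a single point (a node) and non-consecutive pieces disjoint. -/
structure ZeroFlatDecomp (s : ℝ) (γ : Set (Ihat s)) where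
  D : Set ℤ
  ordConn : D.OrdConnected
  nonemptyD : D.Nonempty
  piece : ℤ → Set (Ihat s)
  flat : ∀ i ∈ D, IsMFlat s 0 (piece i)
  union : γ = ⋃ i ∈ D, piece i
  node : ∀ i ∈ D, i + 1 ∈ D → ∃ z : Ihat s, piece i ∩ piece (i + 1) = {z}
  disj : ∀ i ∈ D, ∀ j ∈ D, 1 < |i - j| → piece i ∩ piece j = ∅

/-- A `0`-flat decomposition is efficient if every `0`-flat subarc of `γ` is
contained in one of the pieces. -/
def ZeroFlatDecomp.Efficient {s : ℝ} {γ : Set (Ihat s)}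
    (Δ : ZeroFlatDecomp s γ) : Prop :=
  ∀ γ' : Set (Ihat s), γ' ⊆ γ → IsMFlat s 0 γ' → ∃ i ∈ Δ.D, γ' ⊆ Δ.piece i


/-! ### Auxiliary lemmas for the decomposition theorem -/

section Aux

lemma f_eq_abs {s : ℝ} (hs : 0 < s) (x : ℝ) : f s x = 1 - s * |x - c s| := by
  have hsc : s * c s = s - 1 := by
    unfold c; field_simp
  rcases le_total x (c s) with h | h
  · rw [abs_of_nonpos (by linarith)]
    have h1 : s * x + 2 - s ≤ s * (1 - x) := by nlinarith
    unfold f; rw [min_eq_left h1]; ring_nf; nlinarith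
  · rw [abs_of_nonneg (by linarith)]
    have h1 : s * (1 - x) ≤ s * x + 2 - s := by nlinarith
    unfold f; rw [min_eq_right h1]; ring_nf; nlinarith

lemma f_fold {s : ℝ} (hs : 0 < s) (w : ℝ) : f s (c s + w) = 1 - s * |w| := by
  rw [f_eq_abs hs]; ring_nf

lemma c_mem {s : ℝ} (hs1 : 1 < s) (hs2 : s < 2) : 0 < c s ∧ c s < 1 := by
  unfold c
  constructor
  · have : 1 / s < 1 := by rw [div_lt_one (by linarith)]; linarith
    linarith
  · have : 0 < 1 / s := by positivity
    linarith

lemma f_maps_I {s : ℝ} (hs1 : 1 < s) (hs2 : s < 2) {x : ℝ} (hx : x ∈ I) : f s x ∈ I := by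
  have hs : 0 < s := by linarith
  obtain ⟨hc0, hc1⟩ := c_mem hs1 hs2
  obtain ⟨h0, h1⟩ := hx
  rw [f_eq_abs hs x]
  have hinv : s * (1/s) = 1 := by field_simp
  have habs : |x - c s| ≤ 1 / s := by
    rw [abs_le]
    have h1s : c s = 1 - 1/s := rfl
    constructor <;> rw [h1s] <;> nlinarith
  constructor
  · nlinarith [mul_le_mul_of_nonneg_left habs (le_of_lt hs)]
  · nlinarith [abs_nonneg (x - c s)]

lemma iter_maps_I {s : ℝ} (hs1 : 1 < s) (hs2 : s < 2) (m : ℕ) {x : ℝ} (hx : x ∈ I) :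
    (f s)^[m] x ∈ I := by
  induction m generalizing x with
  | zero => simpa
  | succ k ih => rw [Function.iterate_succ_apply]; exact ih (f_maps_I hs1 hs2 hx)

lemma f_branch_le {s : ℝ} (hs : 0 < s) {x : ℝ} (hx : x ≤ c s) : f s x = s * x + 2 - s := by
  rw [f_eq_abs hs, abs_of_nonpos (by linarith)]
  have hsc : s * c s = s - 1 := by unfold c; field_simp
  nlinarith

lemma f_branch_ge {s : ℝ} (hs : 0 < s) {x : ℝ} (hx : c s ≤ x) : f s x = s - s * x := by
  rw [f_eq_abs hs, abs_of_nonneg (by linarith)]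
  have hsc : s * c s = s - 1 := by unfold c; field_simp
  nlinarith

lemma fiber_finite {s : ℝ} (hs : 0 < s) (y : ℝ) : (f s ⁻¹' {y}).Finite := by
  apply Set.Finite.subset ((Set.finite_singleton (c s + (1-y)/s)).insert (c s - (1-y)/s))
  intro x hx
  simp only [Set.mem_preimage, Set.mem_singleton_iff] at hx
  rw [f_eq_abs hs] at hx
  have habs : |x - c s| = (1-y)/s := by field_simp at hx ⊢; linarith
  have hd : 0 ≤ (1-y)/s := habs ▸ abs_nonneg _
  rcases (abs_eq hd).1 habs with h | h
  · right; simp; linarith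
  · left; linarith

lemma iter_fiber_finite {s : ℝ} (hs : 0 < s) (j : ℕ) (y : ℝ) :
    ((f s)^[j] ⁻¹' {y}).Finite := by
  induction j generalizing y with
  | zero => simpa using Set.finite_singleton y
  | succ k ih =>
    have heq : (f s)^[k+1] ⁻¹' {y} = ⋃ z ∈ (f s)^[k] ⁻¹' {y}, f s ⁻¹' {z} := by
      ext x
      simp [Function.iterate_succ_apply]
    rw [heq]
    exact Set.Finite.biUnion (ih y) (fun z _ => fiber_finite hs z)

lemma turning_finite {s : ℝ} (hs : 0 < s) (m : ℕ) :
    {x : ℝ | ∃ j < m, (f s)^[j] x = c s}.Finite := by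
  have h : {x : ℝ | ∃ j < m, (f s)^[j] x = c s} ⊆
      ⋃ j ∈ Finset.range m, (f s)^[j] ⁻¹' {c s} := by
    rintro x ⟨j, hj, hx⟩
    exact Set.mem_biUnion (Finset.mem_range.2 hj) hx
  exact Set.Finite.subset (Set.Finite.biUnion (Finset.range m).finite_toSet
    (fun j _ => iter_fiber_finite hs j (c s))) h

lemma affine_image_ordConnected {A B : ℝ} (hA : A ≠ 0) {K : Set ℝ} (h : K.OrdConnected) :
    ((fun x => A * x + B) '' K).OrdConnected := by
  constructor
  rintro y₁ ⟨x₁, hx₁, rfl⟩ y₂ ⟨x₂, hx₂, rfl⟩ z hz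
  obtain ⟨hz1, hz2⟩ := hz
  simp only at hz1 hz2
  refine ⟨(z - B)/A, ?_, by field_simp; ring⟩
  have hAv : A * ((z - B)/A) = z - B := by field_simp
  rcases hA.lt_or_gt with hA' | hA'
  · exact h.out hx₂ hx₁ ⟨by nlinarith, by nlinarith⟩
  · exact h.out hx₁ hx₂ ⟨by nlinarith, by nlinarith⟩

lemma affine_on {s : ℝ} (hs1 : 1 < s) (hs2 : s < 2) :
    ∀ (m : ℕ) (K : Set ℝ), K ⊆ I → K.OrdConnected →
    (∀ x ∈ K, (∃ a ∈ K, a < x) → (∃ b ∈ K, x < b) → ∀ j < m, (f s)^[j] x ≠ c s) →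
    ∃ ε β : ℝ, (ε = s ^ m ∨ ε = -s ^ m) ∧ ∀ x ∈ K, (f s)^[m] x = ε * x + β := by
  intro m
  induction m with
  | zero =>
    intro K _ _ _
    exact ⟨1, 0, Or.inl (by norm_num), fun x _ => by simp⟩
  | succ k ih =>
    intro K hKI hKoc hKt
    have hs : 0 < s := by linarith
    have hcases : (∀ x ∈ K, x ≤ c s) ∨ (∀ x ∈ K, c s ≤ x) := by
      by_contra h
      push_neg at h
      obtain ⟨⟨a, ha, hac⟩, ⟨b, hb, hbc⟩⟩ := h
      have hcK : c s ∈ K := hKoc.out hb ha ⟨hbc.le, hac.le⟩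
      exact hKt (c s) hcK ⟨b, hb, hbc⟩ ⟨a, ha, hac⟩ 0 (by omega) (by simp)
    obtain ⟨A, B, hA, hfK⟩ : ∃ A B : ℝ, (A = s ∨ A = -s) ∧ ∀ x ∈ K, f s x = A * x + B := by
      rcases hcases with h | h
      · exact ⟨s, 2 - s, Or.inl rfl, fun x hx => by rw [f_branch_le hs (h x hx)]; ring⟩
      · exact ⟨-s, s, Or.inr rfl, fun x hx => by rw [f_branch_ge hs (h x hx)]; ring⟩
    have hAne : A ≠ 0 := by rcases hA with rfl | rfl <;> [exact ne_of_gt hs; exact ne_of_lt (by linarith)]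
    set K' : Set ℝ := (fun x => A * x + B) '' K with hK'def
    have hK'I : K' ⊆ I := by
      rintro y ⟨x, hx, rfl⟩
      dsimp only
      rw [← hfK x hx]
      exact f_maps_I hs1 hs2 (hKI hx)
    have hK'oc : K'.OrdConnected := affine_image_ordConnected hAne hKoc
    have hK't : ∀ y ∈ K', (∃ a ∈ K', a < y) → (∃ b ∈ K', y < b) → ∀ j < k, (f s)^[j] y ≠ c s := by
      rintro y ⟨x, hx, rfl⟩ ⟨a', ⟨a, haK, rfl⟩, ha'⟩ ⟨b', ⟨b, hbK, rfl⟩, hb'⟩ j hj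
      simp only at ha' hb'
      have hxin : (∃ a ∈ K, a < x) ∧ (∃ b ∈ K, x < b) := by
        rcases hAne.lt_or_gt with hA' | hA'
        · exact ⟨⟨b, hbK, by nlinarith⟩, ⟨a, haK, by nlinarith⟩⟩
        · exact ⟨⟨a, haK, by nlinarith⟩, ⟨b, hbK, by nlinarith⟩⟩
      have heq : (f s)^[j] (A * x + B) = (f s)^[j+1] x := by
        rw [Function.iterate_succ_apply, hfK x hx]
      rw [heq]
      exact hKt x hx hxin.1 hxin.2 (j+1) (by omega)
    obtain ⟨ε', β', hε', hiter⟩ := ih K' hK'I hK'oc hK't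
    refine ⟨ε' * A, ε' * B + β', ?_, ?_⟩
    · rcases hε' with rfl | rfl <;> rcases hA with rfl | rfl
      · left; rw [pow_succ]
      · right; rw [pow_succ]; ring
      · right; rw [pow_succ]; ring
      · left; rw [pow_succ]; ring
    · intro x hx
      rw [Function.iterate_succ_apply, hfK x hx, hiter (A * x + B) ⟨x, hx, rfl⟩]
      ring

lemma zero_eq_iter {s : ℝ} {x : ℕ → ℝ} (hx : x ∈ IhatSet s) (k : ℕ) :
    x 0 = (f s)^[k] (x k) := by
  induction k with
  | zero => rfl
  | succ n ih =>
    rw [ih, Function.iterate_succ_apply, hx.2 n]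

lemma exists_greatest (P : ℤ → Prop) [DecidablePred P] (n : ℕ) (h0 : P 0) :
    ∃ i : ℤ, 0 ≤ i ∧ i ≤ n ∧ P i ∧ ∀ j : ℤ, i < j → j ≤ n → ¬ P j := by
  induction n with
  | zero => exact ⟨0, le_refl _, by norm_num, h0, fun j h1 h2 => by omega⟩
  | succ k ih =>
    by_cases h : P (k+1)
    · exact ⟨k+1, by omega, by push_cast; omega, h, fun j h1 h2 => by omega⟩
    · obtain ⟨i, hi0, hik, hPi, hmax⟩ := ih
      refine ⟨i, hi0, by push_cast at hik ⊢; omega, hPi, fun j h1 h2 => ?_⟩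
      by_cases hj : j ≤ (k:ℤ)
      · exact hmax j h1 hj
      · have hje : j = (k:ℤ)+1 := by push_cast at h2 ⊢; omega
        rw [hje]; exact h

end Aux

set_option maxHeartbeats 2000000 in
/-- every flat arc has a finite efficient `0`-flat decomposition. -/
theorem flat_arc_finite_efficient_decomposition (s : ℝ)
    (hs₁ : Real.sqrt 2 < s) (hs₂ : s < 2)
    (γ : Set (Ihat s)) (hγ : IsFlat s γ) :
    ∃ Δ : ZeroFlatDecomp s γ, Δ.D.Finite ∧ Δ.Efficient := by
  classical
  obtain ⟨m, J, hJI, hJoc, hJnt, e, he⟩ := hγ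
  have hsq : (1:ℝ) < Real.sqrt 2 := by
    nlinarith [Real.sq_sqrt (by norm_num : (0:ℝ) ≤ 2), Real.sqrt_nonneg 2]
  have hs1 : 1 < s := lt_trans hsq hs₁
  have hs : 0 < s := by linarith
  have hspow : 0 < s ^ m := pow_pos hs m
  have hmemJ : ∀ x : Ihat s, x ∈ γ → x.1 m ∈ J := fun x hx => by
    rw [← he ⟨x, hx⟩]; exact (e ⟨x, hx⟩).2
  have hinj : ∀ x ∈ γ, ∀ y ∈ γ, x.1 m = y.1 m → x = y := by
    intro x hx y hy hxy
    have h1 : e ⟨x, hx⟩ = e ⟨y, hy⟩ := Subtype.ext (by rw [he, he]; exact hxy)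
    exact congrArg Subtype.val (e.injective h1)
  set T : Set ℝ :=
    {t | t ∈ J ∧ (∃ j < m, (f s)^[j] t = c s) ∧ (∃ a ∈ J, a < t) ∧ (∃ b ∈ J, t < b)} with hTdef
  have hTJ : T ⊆ J := fun t ht => ht.1
  have hTfin : T.Finite := (turning_finite hs m).subset (fun t ht => ht.2.1)
  set n : ℕ := hTfin.toFinset.card with hn
  set os : Fin n ≃o ↥hTfin.toFinset := hTfin.toFinset.orderIsoOfFin rfl with hos
  set b : ℤ → ℝ := fun i =>
    if h : 1 ≤ i ∧ i ≤ (n:ℤ) then ((os ⟨(i-1).toNat, by omega⟩ : ↥hTfin.toFinset) : ℝ)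
    else if i ≤ 0 then -1 else 2 with hbdef
  have hb0 : b 0 = -1 := by
    simp only [hbdef]
    rw [dif_neg (by omega), if_pos (by omega)]
  have hbtop : b ((n:ℤ)+1) = 2 := by
    simp only [hbdef]
    rw [dif_neg (by omega), if_neg (by omega)]
  have hbT : ∀ i : ℤ, 1 ≤ i → i ≤ (n:ℤ) → b i ∈ T := by
    intro i h1 h2
    simp only [hbdef]
    rw [dif_pos ⟨h1, h2⟩]
    exact hTfin.mem_toFinset.1 (os _).2
  have hTb : ∀ t ∈ T, ∃ i : ℤ, 1 ≤ i ∧ i ≤ (n:ℤ) ∧ b i = t := by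
    intro t ht
    set k : Fin n := os.symm ⟨t, hTfin.mem_toFinset.2 ht⟩ with hk
    have hkn : (k:ℕ) < n := k.isLt
    refine ⟨((k:ℕ):ℤ) + 1, by omega, by omega, ?_⟩
    simp only [hbdef]
    rw [dif_pos ⟨by omega, by omega⟩]
    have harg : (⟨(((k:ℕ):ℤ) + 1 - 1).toNat, by omega⟩ : Fin n) = k := by
      apply Fin.ext
      show ((((k:ℕ):ℤ) + 1 - 1).toNat) = (k:ℕ)
      omega
    rw [harg, hk, os.apply_symm_apply]
  have hTI : T ⊆ I := fun t ht => hJI (hTJ ht)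
  have hbmono : ∀ i j : ℤ, 0 ≤ i → i < j → j ≤ (n:ℤ)+1 → b i < b j := by
    intro i j hi hij hj
    by_cases hi1 : 1 ≤ i
    · have hin : i ≤ (n:ℤ) := by omega
      have hbi : b i ∈ T := hbT i hi1 hin
      by_cases hjn : j ≤ (n:ℤ)
      · simp only [hbdef]
        rw [dif_pos ⟨hi1, hin⟩, dif_pos ⟨by omega, hjn⟩]
        exact Subtype.coe_lt_coe.2 (os.lt_iff_lt.2 (Fin.mk_lt_mk.2 (by omega)))
      · rw [show j = (n:ℤ)+1 by omega, hbtop]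
        linarith [(hTI hbi).2]
    · have hie : b i = -1 := by
        simp only [hbdef]
        rw [dif_neg (by omega), if_pos (by omega)]
      rw [hie]
      by_cases hjn : j ≤ (n:ℤ)
      · linarith [(hTI (hbT j (by omega) hjn)).1]
      · rw [show j = (n:ℤ)+1 by omega, hbtop]; norm_num
  set P : ℤ → Set ℝ := fun i => J ∩ Set.Icc (b i) (b (i+1)) with hPdef
  set piece : ℤ → Set (Ihat s) :=
    fun i => {x : Ihat s | x ∈ γ ∧ x.1 m ∈ Set.Icc (b i) (b (i+1))} with hpiecedef
  have hpieceP : ∀ (i : ℤ) (x : Ihat s), x ∈ piece i ↔ x ∈ γ ∧ x.1 m ∈ P i := by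
    intro i x
    constructor
    · rintro ⟨h1, h2⟩; exact ⟨h1, hmemJ x h1, h2⟩
    · rintro ⟨h1, h2⟩; exact ⟨h1, h2.2⟩
  -- each piece is 0-flat
  have hflat : ∀ i : ℤ, 0 ≤ i → i ≤ (n:ℤ) → MFlatOver s 0 (piece i) ((f s)^[m] '' (P i)) := by
    intro i hi0 hin
    have hPI : P i ⊆ I := fun x hx => hJI hx.1
    have hPoc : (P i).OrdConnected := hJoc.inter Set.ordConnected_Icc
    have hPt : ∀ x ∈ P i, (∃ a ∈ P i, a < x) → (∃ b' ∈ P i, x < b') →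
        ∀ j < m, (f s)^[j] x ≠ c s := by
      rintro x ⟨hxJ, hxl, hxr⟩ ⟨a, haP, hax⟩ ⟨b', hb'P, hxb'⟩ j hj hfj
      obtain ⟨k, hk1, hkn, hbk⟩ :=
        hTb x ⟨hxJ, ⟨j, hj, hfj⟩, ⟨a, haP.1, hax⟩, ⟨b', hb'P.1, hxb'⟩⟩
      have hik : i < k := by
        by_contra hik
        push_neg at hik
        have hle : b k ≤ b i := by
          rcases eq_or_lt_of_le hik with h | h
          · rw [h]
          · exact (hbmono k i (by omega) h (by omega)).le
        linarith [haP.2.1]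
      have hki : k < i + 1 := by
        by_contra hki
        push_neg at hki
        have hle : b (i+1) ≤ b k := by
          rcases eq_or_lt_of_le hki with h | h
          · rw [h]
          · exact (hbmono (i+1) k (by omega) h (by omega)).le
        linarith [hb'P.2.2]
      omega
    obtain ⟨ε, β, hε, haff⟩ := affine_on hs1 hs₂ m (P i) hPI hPoc hPt
    have hεne : ε ≠ 0 := by
      rcases hε with rfl | rfl
      · exact ne_of_gt hspow
      · exact neg_ne_zero.2 (ne_of_gt hspow)
    have hPnt : (P i).Nontrivial := by
      rcases Nat.eq_zero_or_pos n with hn0 | hn1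
      · obtain ⟨x, hx, y, hy, hxy⟩ := hJnt
        have hmem : ∀ z ∈ J, z ∈ P i := by
          intro z hz
          have hz' := hJI hz
          have hie : i = 0 := by omega
          refine ⟨hz, ?_, ?_⟩
          · rw [hie, hb0]; linarith [hz'.1]
          · rw [hie, show (0:ℤ)+1 = (n:ℤ)+1 by omega, hbtop]; linarith [hz'.2]
        exact ⟨x, hmem x hx, y, hmem y hy, hxy⟩
      · by_cases hi1 : 1 ≤ i
        · have hbiT : b i ∈ T := hbT i hi1 hin
          have hbiP : b i ∈ P i :=
            ⟨hTJ hbiT, le_refl _, (hbmono i (i+1) (by omega) (by omega) (by omega)).le⟩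
          by_cases hin' : i + 1 ≤ (n:ℤ)
          · have hbi1T : b (i+1) ∈ T := hbT (i+1) (by omega) hin'
            exact ⟨b i, hbiP, b (i+1),
              ⟨hTJ hbi1T, (hbmono i (i+1) (by omega) (by omega) (by omega)).le, le_refl _⟩,
              ne_of_lt (hbmono i (i+1) (by omega) (by omega) (by omega))⟩
          · obtain ⟨w, hwJ, hw⟩ := hbiT.2.2.2
            refine ⟨b i, hbiP, w, ⟨hwJ, hw.le, ?_⟩, ne_of_lt hw⟩
            rw [show i + 1 = (n:ℤ)+1 by omega, hbtop]
            linarith [(hJI hwJ).2]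
        · have hie : i = 0 := by omega
          subst hie
          have hb1T : b 1 ∈ T := hbT 1 (by omega) (by omega)
          obtain ⟨a, haJ, ha⟩ := hb1T.2.2.1
          refine ⟨a, ⟨haJ, ?_, ?_⟩, b 1, ⟨hTJ hb1T, ?_, ?_⟩, ne_of_lt ha⟩
          · rw [hb0]; linarith [(hJI haJ).1]
          · rw [show (0:ℤ)+1 = 1 by norm_num]; exact ha.le
          · rw [hb0]; linarith [(hJI (hTJ hb1T)).1]
          · rw [show (0:ℤ)+1 = 1 by norm_num]
    have himg : (f s)^[m] '' (P i) = (fun x => ε * x + β) '' (P i) := Set.image_congr haff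
    refine ⟨?_, ?_, ?_, ?_⟩
    · rintro y ⟨x, hx, rfl⟩; exact iter_maps_I hs1 hs₂ m (hPI hx)
    · rw [himg]; exact affine_image_ordConnected hεne hPoc
    · obtain ⟨u, hu, v, hvv, huv⟩ := hPnt
      rw [himg]
      exact ⟨ε*u+β, ⟨u, hu, rfl⟩, ε*v+β, ⟨v, hvv, rfl⟩,
        fun h => huv (mul_left_cancel₀ hεne (by linarith))⟩
    · have hmem1 : ∀ x : ↥(piece i), x.1.1 0 ∈ (f s)^[m] '' (P i) := by
        intro x
        obtain ⟨hxγ, hxP⟩ := (hpieceP i x.1).1 x.2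
        exact ⟨x.1.1 m, hxP, (zero_eq_iter x.1.2 m).symm⟩
      have hx0 : ∀ x : ↥(piece i), x.1.1 0 = ε * x.1.1 m + β := by
        intro x
        obtain ⟨hxγ, hxP⟩ := (hpieceP i x.1).1 x.2
        rw [zero_eq_iter x.1.2 m, haff _ hxP]
      have hvP : ∀ y : ↥((f s)^[m] '' (P i)), (y.1 - β)/ε ∈ P i := by
        intro y
        obtain ⟨x₀, hx₀, hfx₀⟩ := y.2
        have h1 : y.1 = ε * x₀ + β := by rw [← hfx₀, haff x₀ hx₀]
        have h2 : (y.1 - β)/ε = x₀ := by rw [h1]; field_simp; ring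
        rw [h2]; exact hx₀
      have hvJ : ∀ y : ↥((f s)^[m] '' (P i)), (y.1 - β)/ε ∈ J := fun y => (hvP y).1
      set F : ↥(piece i) → ↥((f s)^[m] '' (P i)) := fun x => ⟨x.1.1 0, hmem1 x⟩ with hF
      set G : ↥((f s)^[m] '' (P i)) → ↥(piece i) := fun y =>
        ⟨(e.symm ⟨(y.1-β)/ε, hvJ y⟩).1, by
          refine (hpieceP i _).2 ⟨(e.symm ⟨(y.1-β)/ε, hvJ y⟩).2, ?_⟩
          have hm' : ((e.symm ⟨(y.1-β)/ε, hvJ y⟩).1).1 m = (y.1-β)/ε := by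
            rw [← he (e.symm ⟨(y.1-β)/ε, hvJ y⟩), e.apply_symm_apply]
          rw [hm']
          exact hvP y⟩ with hG
      have hlinv : Function.LeftInverse G F := by
        intro x
        apply Subtype.ext
        obtain ⟨hxγ, hxP⟩ := (hpieceP i x.1).1 x.2
        have hkey : (⟨((F x).1 - β)/ε, hvJ (F x)⟩ : ↥J) = e ⟨x.1, hxγ⟩ := by
          apply Subtype.ext
          rw [he]
          show (x.1.1 0 - β)/ε = x.1.1 m
          rw [hx0 x]; field_simp; ring
        show (e.symm ⟨((F x).1 - β)/ε, hvJ (F x)⟩).1 = x.1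
        rw [hkey, e.symm_apply_apply]
      have hrinv : Function.RightInverse G F := by
        intro y
        apply Subtype.ext
        show (G y).1.1 0 = y.1
        have h1 : (G y).1.1 0 = (f s)^[m] ((G y).1.1 m) := zero_eq_iter (G y).1.2 m
        have h2 : (G y).1.1 m = (y.1-β)/ε := by
          show ((e.symm ⟨(y.1-β)/ε, hvJ y⟩).1).1 m = (y.1-β)/ε
          rw [← he (e.symm ⟨(y.1-β)/ε, hvJ y⟩), e.apply_symm_apply]
        rw [h1, h2, haff _ (hvP y)]
        field_simp; ring
      have hcF : Continuous F := by
        apply Continuous.subtype_mk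
        exact ((continuous_apply 0).comp continuous_subtype_val).comp continuous_subtype_val
      have hcG : Continuous G := by
        apply Continuous.subtype_mk
        refine continuous_subtype_val.comp (e.symm.continuous.comp ?_)
        exact Continuous.subtype_mk ((continuous_subtype_val.sub continuous_const).div_const ε) _
      exact ⟨⟨⟨F, G, hlinv, hrinv⟩, hcF, hcG⟩, fun x => rfl⟩
  refine ⟨⟨Set.Icc 0 (n:ℤ), Set.ordConnected_Icc,
    ⟨0, Set.mem_Icc.2 ⟨le_refl _, Int.natCast_nonneg n⟩⟩, piece,
    fun i hi => ⟨(f s)^[m] '' (P i),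
      hflat i (Set.mem_Icc.1 hi).1 (Set.mem_Icc.1 hi).2⟩, ?_, ?_, ?_⟩,
    Set.finite_Icc _ _, ?_⟩
  · -- union
    apply Set.Subset.antisymm
    · intro x hx
      have hxJ := hmemJ x hx
      have h0 : b 0 ≤ x.1 m := by rw [hb0]; linarith [(hJI hxJ).1]
      obtain ⟨i, hi0, hin, hPi, hmax⟩ := exists_greatest (fun i => b i ≤ x.1 m) n h0
      refine Set.mem_biUnion (Set.mem_Icc.2 ⟨hi0, hin⟩) ?_
      refine ⟨hx, hPi, ?_⟩
      by_cases hie : i + 1 ≤ (n:ℤ)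
      · by_contra hlt
        push_neg at hlt
        exact hmax (i+1) (by omega) hie hlt.le
      · rw [show i + 1 = (n:ℤ)+1 by omega, hbtop]
        linarith [(hJI hxJ).2]
    · intro x hx
      rw [Set.mem_iUnion₂] at hx
      obtain ⟨i, _, h⟩ := hx
      exact h.1
  · -- node
    intro i hiD hi1D
    rw [Set.mem_Icc] at hiD hi1D
    have htT : b (i+1) ∈ T := hbT (i+1) (by omega) (by omega)
    have htJ : b (i+1) ∈ J := hTJ htT
    refine ⟨(e.symm ⟨b (i+1), htJ⟩).1, ?_⟩
    have hzm : ((e.symm ⟨b (i+1), htJ⟩).1).1 m = b (i+1) := by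
      rw [← he (e.symm ⟨b (i+1), htJ⟩), e.apply_symm_apply]
    ext x
    simp only [Set.mem_inter_iff, Set.mem_singleton_iff]
    constructor
    · rintro ⟨⟨hxγ, hxl⟩, ⟨_, hxr⟩⟩
      have hxm : x.1 m = b (i+1) := le_antisymm hxl.2 hxr.1
      exact hinj x hxγ _ (e.symm ⟨b (i+1), htJ⟩).2 (by rw [hxm, hzm])
    · rintro rfl
      constructor
      · refine ⟨(e.symm ⟨b (i+1), htJ⟩).2, ?_⟩
        rw [hzm]
        exact ⟨(hbmono i (i+1) (by omega) (by omega) (by omega)).le, le_refl _⟩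
      · refine ⟨(e.symm ⟨b (i+1), htJ⟩).2, ?_⟩
        rw [hzm]
        exact ⟨le_refl _, (hbmono (i+1) (i+1+1) (by omega) (by omega) (by omega)).le⟩
  · -- disj
    intro i hiD j hjD hij
    rw [Set.mem_Icc] at hiD hjD
    have hcase : i + 1 < j ∨ j + 1 < i := by
      rcases le_total i j with h | h
      · left; rw [abs_of_nonpos (by omega)] at hij; omega
      · right; rw [abs_of_nonneg (by omega)] at hij; omega
    have key : ∀ i' j' : ℤ, 0 ≤ i' → j' ≤ (n:ℤ) → i' + 1 < j' → piece i' ∩ piece j' = ∅ := by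
      intro i' j' h1 h2 h3
      ext x
      simp only [Set.mem_inter_iff, Set.mem_empty_iff_false, iff_false, not_and]
      rintro ⟨_, hxl⟩ ⟨_, hxr⟩
      have := hbmono (i'+1) j' (by omega) (by omega) (by omega)
      linarith [hxl.2, hxr.1]
    rcases hcase with h | h
    · exact key i j hiD.1 hjD.2 h
    · rw [Set.inter_comm]; exact key j i hjD.1 hiD.2 h
  · -- efficiency
    rintro γ' hsub ⟨J', hJ'I, hJ'oc, hJ'nt, e', he'⟩
    have h0inj : ∀ x ∈ γ', ∀ y ∈ γ', x.1 0 = y.1 0 → x = y := by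
      intro x hx y hy hxy
      have h1 : e' ⟨x, hx⟩ = e' ⟨y, hy⟩ := Subtype.ext (by rw [he', he']; exact hxy)
      exact congrArg Subtype.val (e'.injective h1)
    set Q : Set ℝ := (fun x : Ihat s => x.1 m) '' γ' with hQdef
    have hQJ : Q ⊆ J := by rintro q ⟨x, hx, rfl⟩; exact hmemJ x (hsub hx)
    have hQI : Q ⊆ I := fun q hq => hJI (hQJ hq)
    have hfm : ∀ x ∈ γ', x.1 0 = (f s)^[m] (x.1 m) :=
      fun x hx => zero_eq_iter x.2 m
    have hfQinj : ∀ u ∈ Q, ∀ w ∈ Q, (f s)^[m] u = (f s)^[m] w → u = w := by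
      rintro u ⟨x, hx, rfl⟩ w ⟨y, hy, rfl⟩ huw
      have hxy : x.1 0 = y.1 0 := by rw [hfm x hx, hfm y hy]; exact huw
      rw [h0inj x hx y hy hxy]
    have hγ'pre : IsPreconnected γ' := by
      rw [isPreconnected_iff_preconnectedSpace]
      have h2 : PreconnectedSpace ↥J' := Subtype.preconnectedSpace hJ'oc.isPreconnected
      constructor
      have huniv : (Set.univ : Set ↥γ') = ⇑e'.symm '' Set.univ := by
        rw [Set.image_univ, e'.symm.surjective.range_eq]
      rw [huniv]
      exact PreconnectedSpace.isPreconnected_univ.image _ e'.symm.continuous.continuousOn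
    have hQpre : IsPreconnected Q :=
      hγ'pre.image _ (((continuous_apply m).comp continuous_subtype_val).continuousOn)
    have hQoc : Q.OrdConnected := hQpre.ordConnected
    obtain ⟨j₁, hj₁, j₂, hj₂, hjne⟩ := hJ'nt
    have hx₁γ : (e'.symm ⟨j₁, hj₁⟩).1 ∈ γ' := (e'.symm ⟨j₁, hj₁⟩).2
    have hx₂γ : (e'.symm ⟨j₂, hj₂⟩).1 ∈ γ' := (e'.symm ⟨j₂, hj₂⟩).2
    have hx12 : (e'.symm ⟨j₁, hj₁⟩).1 ≠ (e'.symm ⟨j₂, hj₂⟩).1 := by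
      intro h
      apply hjne
      have h2 : (⟨j₁,hj₁⟩ : ↥J') = ⟨j₂,hj₂⟩ := e'.symm.injective (Subtype.ext h)
      exact congrArg Subtype.val h2
    have hm12 : ((e'.symm ⟨j₁, hj₁⟩).1).1 m ≠ ((e'.symm ⟨j₂, hj₂⟩).1).1 m :=
      fun h => hx12 (hinj _ (hsub hx₁γ) _ (hsub hx₂γ) h)
    obtain ⟨u₀, w₀, hu₀, hw₀, huw₀⟩ : ∃ u₀ w₀ : ℝ, u₀ ∈ Q ∧ w₀ ∈ Q ∧ u₀ < w₀ := by
      rcases hm12.lt_or_gt with h | h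
      · exact ⟨_, _, ⟨_, hx₁γ, rfl⟩, ⟨_, hx₂γ, rfl⟩, h⟩
      · exact ⟨_, _, ⟨_, hx₂γ, rfl⟩, ⟨_, hx₁γ, rfl⟩, h⟩
    by_cases hcaseA : ∃ k : ℤ, 1 ≤ k ∧ k ≤ (n:ℤ) ∧ (∃ u ∈ Q, u < b k) ∧ (∃ w ∈ Q, b k < w)
    · exfalso
      obtain ⟨k, hk1, hkn, ⟨u, huQ, hub⟩, ⟨w, hwQ, hbw⟩⟩ := hcaseA
      set t : ℝ := b k with htdef
      have htT : t ∈ T := hbT k hk1 hkn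
      have htJ : t ∈ J := hTJ htT
      have hIccQ : Set.Icc u w ⊆ Q := fun z hz => hQoc.out huQ hwQ hz
      set Fd : Finset ℝ := insert (t - u) (insert (w - t)
        (((Finset.Icc (1:ℤ) (n:ℤ)).filter (fun k' => b k' ≠ t)).image
          (fun k' => |b k' - t|))) with hFd
      have hFdne : Fd.Nonempty := ⟨t - u, Finset.mem_insert_self _ _⟩
      set δ : ℝ := Fd.min' hFdne with hδdef
      have hδpos : 0 < δ := by
        rw [hδdef]
        rw [Finset.lt_min'_iff]
        intro y hy
        rw [hFd] at hy
        rcases Finset.mem_insert.1 hy with h | h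
        · rw [h]; linarith
        rcases Finset.mem_insert.1 h with h | h
        · rw [h]; linarith
        obtain ⟨k', hk', rfl⟩ := Finset.mem_image.1 h
        exact abs_pos.2 (sub_ne_zero.2 (Finset.mem_filter.1 hk').2)
      have hδu : δ ≤ t - u := Finset.min'_le _ _ (Finset.mem_insert_self _ _)
      have hδw : δ ≤ w - t :=
        Finset.min'_le _ _ (Finset.mem_insert.2 (Or.inr (Finset.mem_insert_self _ _)))
      have hδk : ∀ k' : ℤ, 1 ≤ k' → k' ≤ (n:ℤ) → b k' ≠ t → δ ≤ |b k' - t| := by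
        intro k' h1 h2 h3
        apply Finset.min'_le
        apply Finset.mem_insert.2; right
        apply Finset.mem_insert.2; right
        exact Finset.mem_image.2 ⟨k', Finset.mem_filter.2 ⟨Finset.mem_Icc.2 ⟨h1, h2⟩, h3⟩, rfl⟩
      have hKQ : Set.Icc (t-δ) (t+δ) ⊆ Q :=
        fun z hz => hIccQ ⟨by linarith [hz.1], by linarith [hz.2]⟩
      have hex : ∃ j, (f s)^[j] t = c s := by
        obtain ⟨j, _, hj⟩ := htT.2.1; exact ⟨j, hj⟩
      set j : ℕ := Nat.find hex with hjdef
      have hjc : (f s)^[j] t = c s := Nat.find_spec hex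
      have hjm : j < m := by
        obtain ⟨j₀, hj₀, hj₀c⟩ := htT.2.1
        exact lt_of_le_of_lt (Nat.find_min' hex hj₀c) hj₀
      have hturn : ∀ x, t - δ < x → x < t + δ → x ≠ t → ∀ i' < m, (f s)^[i'] x ≠ c s := by
        intro x hx1 hx2 hxt i' hi' hfi'
        have hxQ : x ∈ Q := hKQ ⟨hx1.le, hx2.le⟩
        have hxT : x ∈ T :=
          ⟨hQJ hxQ, ⟨i', hi', hfi'⟩, ⟨u, hQJ huQ, by linarith⟩, ⟨w, hQJ hwQ, by linarith⟩⟩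
        obtain ⟨k', h1, h2, h3⟩ := hTb x hxT
        have hne : b k' ≠ t := by rw [h3]; exact hxt
        have hge := hδk k' h1 h2 hne
        rw [h3] at hge
        have habs : |x - t| < δ := abs_lt.2 ⟨by linarith, by linarith⟩
        linarith
      obtain ⟨ε₁, β₁, hε₁, haff₁⟩ := affine_on hs1 hs₂ j (Set.Icc (t-δ) t)
        (fun z hz => hJI (hQJ (hKQ ⟨hz.1, by linarith [hz.2]⟩)))
        Set.ordConnected_Icc
        (by
          rintro x hx ⟨a, ha, hax⟩ ⟨b', hb', hxb'⟩ i' hi'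
          exact hturn x (by linarith [ha.1]) (by linarith [hb'.2, hδpos])
            (ne_of_lt (by linarith [hb'.2])) i' (by omega))
      obtain ⟨ε₂, β₂, hε₂, haff₂⟩ := affine_on hs1 hs₂ j (Set.Icc t (t+δ))
        (fun z hz => hJI (hQJ (hKQ ⟨by linarith [hz.1], hz.2⟩)))
        Set.ordConnected_Icc
        (by
          rintro x hx ⟨a, ha, hax⟩ ⟨b', hb', hxb'⟩ i' hi'
          exact hturn x (by linarith [ha.1, hδpos]) (by linarith [hb'.2])
            (ne_of_gt (by linarith [ha.1])) i' (by omega))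
      have hc₁ : ε₁ * t + β₁ = c s := by
        rw [← haff₁ t ⟨by linarith, le_refl t⟩]; exact hjc
      have hc₂ : ε₂ * t + β₂ = c s := by
        rw [← haff₂ t ⟨le_refl t, by linarith⟩]; exact hjc
      have habs₁ : |ε₁| = s ^ j := by
        rcases hε₁ with rfl | rfl
        · exact abs_of_pos (pow_pos hs j)
        · rw [abs_neg]; exact abs_of_pos (pow_pos hs j)
      have habs₂ : |ε₂| = s ^ j := by
        rcases hε₂ with rfl | rfl
        · exact abs_of_pos (pow_pos hs j)
        · rw [abs_neg]; exact abs_of_pos (pow_pos hs j)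
      have hstep : ∀ (εx βx z : ℝ), |εx| = s ^ j → εx * t + βx = c s →
          (f s)^[j] z = εx * z + βx → (f s)^[j+1] z = 1 - s^(j+1) * |z - t| := by
        intro εx βx z hab hct hz
        rw [Function.iterate_succ_apply', hz]
        have h1 : εx * z + βx = c s + εx * (z - t) := by rw [← hct]; ring
        rw [h1, f_fold hs, abs_mul, hab, pow_succ]
        ring
      have e1 : (f s)^[j+1] (t - δ) = 1 - s^(j+1) * |t - δ - t| :=
        hstep ε₁ β₁ (t-δ) habs₁ hc₁ (haff₁ (t-δ) ⟨le_refl _, by linarith⟩)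
      have e2 : (f s)^[j+1] (t + δ) = 1 - s^(j+1) * |t + δ - t| :=
        hstep ε₂ β₂ (t+δ) habs₂ hc₂ (haff₂ (t+δ) ⟨by linarith, le_refl _⟩)
      have habseq : |t - δ - t| = |t + δ - t| := by
        rw [show t - δ - t = -δ by ring, show t + δ - t = δ by ring, abs_neg]
      have hmm : m - (j+1) + (j+1) = m := by omega
      have hm1 : (f s)^[m] (t - δ) = (f s)^[m] (t + δ) := by
        calc (f s)^[m] (t - δ) = (f s)^[m - (j+1)] ((f s)^[j+1] (t - δ)) := by
              rw [← Function.iterate_add_apply, hmm]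
          _ = (f s)^[m - (j+1)] ((f s)^[j+1] (t + δ)) := by rw [e1, e2, habseq]
          _ = (f s)^[m] (t + δ) := by rw [← Function.iterate_add_apply, hmm]
      have h1Q : t - δ ∈ Q := hKQ ⟨le_refl _, by linarith⟩
      have h2Q : t + δ ∈ Q := hKQ ⟨by linarith, le_refl _⟩
      have := hfQinj _ h1Q _ h2Q hm1
      linarith
    · push_neg at hcaseA
      have h0 : b 0 < w₀ := by rw [hb0]; linarith [(hQI hw₀).1]
      obtain ⟨i, hi0, hin, hPi, hmax⟩ := exists_greatest (fun i => b i < w₀) n h0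
      refine ⟨i, Set.mem_Icc.2 ⟨hi0, hin⟩, ?_⟩
      have hQsub : Q ⊆ Set.Icc (b i) (b (i+1)) := by
        intro z hz
        constructor
        · by_contra hlt
          push_neg at hlt
          have hi1 : 1 ≤ i := by
            by_contra h'
            have hie : i = 0 := by omega
            rw [hie, hb0] at hlt
            linarith [(hQI hz).1]
          have := hcaseA i hi1 hin ⟨z, hz, hlt⟩ w₀ hw₀
          linarith
        · by_cases hi1n : i + 1 ≤ (n:ℤ)
          · by_contra hlt
            push_neg at hlt
            have hwle : w₀ ≤ b (i+1) := by
              by_contra h'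
              push_neg at h'
              exact hmax (i+1) (by omega) hi1n h'
            have := hcaseA (i+1) (by omega) hi1n ⟨u₀, hu₀, by linarith⟩ z hz
            linarith
          · rw [show i + 1 = (n:ℤ)+1 by omega, hbtop]
            linarith [(hQI hz).2]
      intro x hx
      exact ⟨hsub hx, hQsub ⟨x, hx, rfl⟩⟩

end Tent
end
end

section
/- If γ ⊆ Î is a flat closed arc with π_ℓ(γ) = I for some ℓ ≥ 0, then the length of γ is at least (2s/(2s − 1))·s^ℓ. -/
open Set MeasureTheory ENNReal Topology

noncomputable section

namespace Tent

lemma f_eq {s : ℝ} (hs : 1 < s) (x : ℝ) : f s x = 1 - s * |x - c s| := by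
  have hs0 : (0:ℝ) < s := by linarith
  rcases le_total x (c s) with h | h
  · rw [f, min_eq_left, abs_of_nonpos (by linarith)]
    · unfold c; field_simp; ring
    · unfold c at h
      have h2 : s * x ≤ s * (1 - 1/s) := mul_le_mul_of_nonneg_left h (by linarith)
      have h3 : s * (1 - 1/s) = s - 1 := by field_simp
      linarith
  · rw [f, min_eq_right, abs_of_nonneg (by linarith)]
    · unfold c; field_simp; ring
    · unfold c at h
      have h2 : s * (1 - 1/s) ≤ s * x := mul_le_mul_of_nonneg_left h (by linarith)
      have h3 : s * (1 - 1/s) = s - 1 := by field_simp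
      linarith

lemma f_lipschitz {s : ℝ} (hs : 1 < s) (x y : ℝ) : |f s x - f s y| ≤ s * |x - y| := by
  rw [f_eq hs, f_eq hs]
  have : (1 - s * |x - c s|) - (1 - s * |y - c s|) = s * (|y - c s| - |x - c s|) := by ring
  rw [this, abs_mul, abs_of_nonneg (by linarith : (0:ℝ) ≤ s)]
  have h2 := abs_abs_sub_abs_le_abs_sub (y - c s) (x - c s)
  have h3 : y - c s - (x - c s) = y - x := by ring
  rw [h3] at h2
  rw [abs_sub_comm x y]
  nlinarith [abs_nonneg (y - x)]

lemma f_iter_lipschitz {s : ℝ} (hs : 1 < s) (n : ℕ) (x y : ℝ) :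
    |(f s)^[n] x - (f s)^[n] y| ≤ s ^ n * |x - y| := by
  induction n generalizing x y with
  | zero => simp
  | succ n ih =>
    rw [Function.iterate_succ_apply, Function.iterate_succ_apply]
    calc |(f s)^[n] (f s x) - (f s)^[n] (f s y)| ≤ s ^ n * |f s x - f s y| := ih _ _
      _ ≤ s ^ n * (s * |x - y|) := by
          have := f_lipschitz hs x y
          have hn : (0:ℝ) ≤ s ^ n := by positivity
          nlinarith
      _ = s ^ (n+1) * |x - y| := by ring

lemma f_same_side {s : ℝ} (hs : 1 < s) {x y : ℝ} (hxy : 0 ≤ (x - c s) * (y - c s)) :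
    |f s x - f s y| = s * |x - y| := by
  rw [f_eq hs, f_eq hs]
  have key : |(|y - c s| - |x - c s|)| = |x - y| := by
    rcases le_total x (c s) with h1 | h1 <;> rcases le_total y (c s) with h2 | h2
    · rw [abs_of_nonpos (by linarith : y - c s ≤ 0), abs_of_nonpos (by linarith : x - c s ≤ 0)]
      rw [show -(y - c s) - -(x - c s) = x - y by ring]
    · -- x ≤ c ≤ y, product ≥ 0 forces x = c or y = c
      have h0 : (x - c s) * (y - c s) ≤ 0 := mul_nonpos_of_nonpos_of_nonneg (by linarith) (by linarith)
      have := le_antisymm h0 hxy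
      rcases mul_eq_zero.mp this with h | h
      · have hx : x = c s := by linarith [sub_eq_zero.mp h]
        subst hx
        simp [abs_sub_comm]
      · have hy : y = c s := by linarith [sub_eq_zero.mp h]
        subst hy
        simp [abs_sub_comm]
    · have h0 : (x - c s) * (y - c s) ≤ 0 := mul_nonpos_of_nonneg_of_nonpos (by linarith) (by linarith)
      have := le_antisymm h0 hxy
      rcases mul_eq_zero.mp this with h | h
      · have hx : x = c s := by linarith [sub_eq_zero.mp h]
        subst hx
        simp [abs_sub_comm]
      · have hy : y = c s := by linarith [sub_eq_zero.mp h]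
        subst hy
        simp
    · rw [abs_of_nonneg (by linarith : 0 ≤ y - c s), abs_of_nonneg (by linarith : 0 ≤ x - c s)]
      rw [show y - c s - (x - c s) = -(x - y) by ring, abs_neg]
  rw [show (1 - s * |x - c s|) - (1 - s * |y - c s|) = s * (|y - c s| - |x - c s|) by ring,
    abs_mul, abs_of_nonneg (by linarith : (0:ℝ) ≤ s), key]


/-- Sum of successive jumps of `g` along a finite list of parameters. -/
def vsum (g : ↥(Set.Icc (0:ℝ) 1) → ℝ) : List ↥(Set.Icc (0:ℝ) 1) → ℝ
  | [] => 0
  | [_] => 0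
  | a :: b :: l => |g b - g a| + vsum g (b :: l)

lemma vsum_nonneg (g : ↥(Set.Icc (0:ℝ) 1) → ℝ) (L : List ↥(Set.Icc (0:ℝ) 1)) :
    0 ≤ vsum g L := by
  induction L with
  | nil => simp [vsum]
  | cons a l ih =>
    cases l with
    | nil => simp [vsum]
    | cons b l' =>
      simp only [vsum]
      have := abs_nonneg (g b - g a)
      linarith

lemma vsum_cons_head (g : ↥(Set.Icc (0:ℝ) 1) → ℝ) {a b : ↥(Set.Icc (0:ℝ) 1)}
    {M : List ↥(Set.Icc (0:ℝ) 1)} (hb : M.head? = some b) :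
    vsum g (a :: M) = |g b - g a| + vsum g M := by
  cases M with
  | nil => simp at hb
  | cons x l =>
    simp only [List.head?_cons, Option.some.injEq] at hb
    subst hb
    rfl

lemma vsum_comp {g1 g2 : ↥(Set.Icc (0:ℝ) 1) → ℝ} {K : ℝ}
    (h : ∀ u v, |g1 u - g1 v| ≤ K * |g2 u - g2 v|) (L : List ↥(Set.Icc (0:ℝ) 1)) :
    vsum g1 L ≤ K * vsum g2 L := by
  induction L with
  | nil => simp [vsum]
  | cons a l ih =>
    cases l with
    | nil => simp [vsum]
    | cons b l' =>
      simp only [vsum]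
      have h1 := h b a
      have h2 := ih
      linarith [mul_add K (|g2 b - g2 a|) (vsum g2 (b :: l'))]

lemma vsum_eq_sum (g : ↥(Set.Icc (0:ℝ) 1) → ℝ) (d : ↥(Set.Icc (0:ℝ) 1)) :
    ∀ (P : List ↥(Set.Icc (0:ℝ) 1)), P ≠ [] →
    vsum g P = ∑ j ∈ Finset.range (P.length - 1), |g (P.getD (j+1) d) - g (P.getD j d)|
  | [], h => absurd rfl h
  | [a], _ => by simp [vsum]
  | a :: b :: l, _ => by
    have ih := vsum_eq_sum g d (b :: l) (by simp)
    simp only [List.length_cons, Nat.add_sub_cancel] at ih ⊢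
    simp only [vsum]
    rw [Finset.sum_range_succ']
    simp only [List.getD_cons_succ, List.getD_cons_zero]
    simp only [List.getD_cons_succ] at ih
    rw [ih]
    ring

lemma chain'_getD_mono {P : List ↥(Set.Icc (0:ℝ) 1)} (hP : P.Chain' (· ≤ ·))
    (d : ↥(Set.Icc (0:ℝ) 1)) {i j : ℕ} (hij : i ≤ j) (hj : j < P.length) :
    P.getD i d ≤ P.getD j d := by
  rcases eq_or_lt_of_le hij with rfl | hij'
  · exact le_refl _
  · have hi : i < P.length := lt_trans hij' hj
    rw [List.getD_eq_getElem P d hi, List.getD_eq_getElem P d hj]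
    exact (List.pairwise_iff_getElem.mp (List.isChain_iff_pairwise.mp hP)) i j hi hj hij'

/-- The key refinement step: refining a partition by critical-point crossing times
multiplies the jump-sum by `s` when composing with `f`. -/
lemma vsum_step {s : ℝ} (hs : 1 < s) {h : ↥(Set.Icc (0:ℝ) 1) → ℝ} (hc : Continuous h)
    (L : List ↥(Set.Icc (0:ℝ) 1)) (hL : L.Chain' (· ≤ ·)) :
    ∃ M : List ↥(Set.Icc (0:ℝ) 1), M.Chain' (· ≤ ·) ∧ M.head? = L.head? ∧
      s * vsum h L ≤ vsum (fun t => f s (h t)) M := by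
  induction L with
  | nil => exact ⟨[], by simp [List.Chain'], rfl, by simp [vsum]⟩
  | cons a l ih =>
    cases l with
    | nil => exact ⟨[a], by simp [List.Chain'], rfl, by simp [vsum]⟩
    | cons b l' =>
      rw [List.Chain', List.isChain_cons_cons] at hL
      obtain ⟨hab, hchain⟩ := hL
      obtain ⟨M, hM, hMhead, hMbound⟩ := ih hchain
      have hMhead' : M.head? = some b := by rw [hMhead]; rfl
      rcases le_or_gt 0 ((h a - c s) * (h b - c s)) with hside | hside
      · -- same side of the critical point: prepend a
        refine ⟨a :: M, ?_, rfl, ?_⟩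
        · rw [List.Chain', List.isChain_cons]
          exact ⟨fun y hy => by rw [hMhead'] at hy; simp at hy; subst hy; exact hab, hM⟩
        · rw [vsum_cons_head _ hMhead',
            show vsum h (a :: b :: l') = |h b - h a| + vsum h (b :: l') from rfl]
          have heq : |f s (h b) - f s (h a)| = s * |h b - h a| :=
            f_same_side hs (by nlinarith)
          rw [heq]
          linarith [mul_add s (|h b - h a|) (vsum h (b :: l'))]
      · -- opposite sides: insert a crossing time w with h w = c s
        have hab' : (a : ℝ) ≤ b := hab
        set H : ℝ → ℝ := fun r => h (Set.projIcc 0 1 (by norm_num) r) with hH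
        have hHc : Continuous H := hc.comp continuous_projIcc
        have hHa : H a = h a := by simp only [hH, Set.projIcc_val]
        have hHb : H b = h b := by simp only [hH, Set.projIcc_val]
        have hmem : c s ∈ Set.uIcc (H (a:ℝ)) (H (b:ℝ)) := by
          rw [hHa, hHb, Set.mem_uIcc]
          rcases mul_neg_iff.mp hside with ⟨h1, h2⟩ | ⟨h1, h2⟩
          · right; constructor <;> linarith
          · left; constructor <;> linarith
        obtain ⟨r, hr, hrc⟩ := intermediate_value_uIcc hHc.continuousOn hmem
        rw [Set.uIcc_of_le hab'] at hr
        have hr01 : r ∈ Set.Icc (0:ℝ) 1 :=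
          ⟨le_trans a.2.1 hr.1, le_trans hr.2 b.2.2⟩
        set w : ↥(Set.Icc (0:ℝ) 1) := ⟨r, hr01⟩ with hw
        have hwc : h w = c s := by
          rw [← hrc]; simp only [hH]
          congr 1
          rw [Set.projIcc_of_mem _ hr01]
        refine ⟨a :: w :: M, ?_, rfl, ?_⟩
        · rw [List.Chain', List.isChain_cons_cons]
          refine ⟨hr.1, ?_⟩
          rw [List.isChain_cons]
          exact ⟨fun y hy => by rw [hMhead'] at hy; simp at hy; subst hy; exact hr.2, hM⟩
        · have e1 : vsum (fun t => f s (h t)) (a :: w :: M) =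
              |f s (h w) - f s (h a)| + (|f s (h b) - f s (h w)| + vsum (fun t => f s (h t)) M) := by
            rw [show vsum (fun t => f s (h t)) (a :: w :: M) =
              |f s (h w) - f s (h a)| + vsum (fun t => f s (h t)) (w :: M) from rfl]
            rw [vsum_cons_head _ hMhead']
          rw [e1, show vsum h (a :: b :: l') = |h b - h a| + vsum h (b :: l') from rfl]
          have e2 : |f s (h w) - f s (h a)| = s * |h w - h a| :=
            f_same_side hs (by rw [hwc]; simp)
          have e3 : |f s (h b) - f s (h w)| = s * |h b - h w| :=
            f_same_side hs (by rw [hwc]; simp)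
          have e4 : |h w - h a| + |h b - h w| = |h b - h a| := by
            rw [hwc]
            rcases mul_neg_iff.mp hside with ⟨h1, h2⟩ | ⟨h1, h2⟩
            · rw [abs_of_nonpos (by linarith), abs_of_nonpos (by linarith),
                abs_of_nonpos (by linarith)]
              ring
            · rw [abs_of_nonneg (by linarith), abs_of_nonneg (by linarith),
                abs_of_nonneg (by linarith)]
              ring
          rw [e2, e3]
          have : s * (|h w - h a| + |h b - h w|) = s * |h b - h a| := by rw [e4]
          nlinarith [vsum_nonneg (fun t => f s (h t)) M, abs_nonneg (h b - h a)]



/-- if `γ` is a flat closed arc with `π_ℓ(γ) = I`, then the length of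
`γ` is at least `(2s/(2s−1))·s^ℓ`. -/
theorem length_of_full_flat_arc (s : ℝ) (hs₁ : Real.sqrt 2 < s) (hs₂ : s < 2)
    (γ : Set (Ihat s)) (hγ : IsFlatClosedArc s γ) (ℓ : ℕ)
    (hproj : (fun x : Ihat s => x.1 ℓ) '' γ = I) :
    ENNReal.ofReal (2 * s / (2 * s - 1) * s ^ ℓ) ≤ arcLength s γ := by
  have hs1 : 1 < s := by
    have h2 : (1:ℝ) ≤ Real.sqrt 2 := by
      rw [show (1:ℝ) = Real.sqrt 1 from (Real.sqrt_one).symm]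
      exact Real.sqrt_le_sqrt (by norm_num)
    linarith
  obtain ⟨e⟩ := hγ.1
  -- coordinate functions along the arc
  set G : ℕ → ↥(Set.Icc (0:ℝ) 1) → ℝ := fun i t => ((e.symm t).1).1 i with hGdef
  have hGmem : ∀ i t, G i t ∈ Set.Icc (0:ℝ) 1 := fun i t => ((e.symm t).1).2.1 i
  have hGf : ∀ i t, f s (G (i+1) t) = G i t := fun i t => ((e.symm t).1).2.2 i
  have hGcont : ∀ i, Continuous (G i) :=
    fun i => ((continuous_apply i).comp
      (continuous_subtype_val.comp continuous_subtype_val)).comp e.symm.continuous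
  have hG0 : ∀ (i : ℕ) t, (f s)^[i] (G i t) = G 0 t := by
    intro i
    induction i with
    | zero => intro t; rfl
    | succ i ih =>
      intro t
      rw [Function.iterate_succ_apply, hGf i t]
      exact ih t
  -- endpoints over 0 and 1 at level ℓ
  have h0mem : (0:ℝ) ∈ (fun x : Ihat s => x.1 ℓ) '' γ := by
    rw [hproj]; exact ⟨le_refl 0, by norm_num⟩
  have h1mem : (1:ℝ) ∈ (fun x : Ihat s => x.1 ℓ) '' γ := by
    rw [hproj]; exact ⟨by norm_num, le_refl 1⟩
  obtain ⟨x0, hx0γ, hx0⟩ := h0mem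
  obtain ⟨x1, hx1γ, hx1⟩ := h1mem
  set t0 : ↥(Set.Icc (0:ℝ) 1) := e ⟨x0, hx0γ⟩ with ht0
  set t1 : ↥(Set.Icc (0:ℝ) 1) := e ⟨x1, hx1γ⟩ with ht1
  have hGt0 : G ℓ t0 = 0 := by
    simp only [hGdef, ht0, Homeomorph.symm_apply_apply]; exact hx0
  have hGt1 : G ℓ t1 = 1 := by
    simp only [hGdef, ht1, Homeomorph.symm_apply_apply]; exact hx1
  -- iterated refinement: a partition with vsum (G 0) ≥ s^ℓ
  have key : ∀ n, n ≤ ℓ → ∃ P : List ↥(Set.Icc (0:ℝ) 1),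
      P.Chain' (· ≤ ·) ∧ P ≠ [] ∧ s ^ n ≤ vsum (G (ℓ - n)) P := by
    intro n
    induction n with
    | zero =>
      intro _
      rcases le_total t0 t1 with hc | hc
      · exact ⟨[t0, t1], by simp [List.Chain', hc], by simp,
          by simp [vsum, Nat.sub_zero, hGt0, hGt1]⟩
      · exact ⟨[t1, t0], by simp [List.Chain', hc], by simp,
          by simp [vsum, Nat.sub_zero, hGt0, hGt1]⟩
    | succ n ih =>
      intro hn
      obtain ⟨P, hP, hPne, hv⟩ := ih (Nat.le_of_succ_le hn)
      obtain ⟨M, hM, hMh, hMb⟩ := vsum_step hs1 (hGcont (ℓ - n)) P hP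
      refine ⟨M, hM, ?_, ?_⟩
      · intro hMnil
        rw [hMnil] at hMh
        cases P with
        | nil => exact hPne rfl
        | cons a l => simp at hMh
      · have hfun : (fun t => f s (G (ℓ - n) t)) = G (ℓ - (n+1)) := by
          funext t
          rw [show ℓ - n = ℓ - (n+1) + 1 from by omega]
          exact hGf (ℓ - (n+1)) t
        calc s ^ (n+1) = s * s ^ n := by ring
          _ ≤ s * vsum (G (ℓ - n)) P := mul_le_mul_of_nonneg_left hv (by linarith)
          _ ≤ vsum (fun t => f s (G (ℓ - n) t)) M := hMb
          _ = vsum (G (ℓ - (n+1))) M := by rw [hfun]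
  obtain ⟨P, hP, hPne, hv⟩ := key ℓ le_rfl
  rw [Nat.sub_self] at hv
  -- the partition data
  set d0 : ↥(Set.Icc (0:ℝ) 1) := ⟨0, by norm_num⟩ with hd0
  set k : ℕ := P.length - 1 with hk
  set t : ℕ → ↥(Set.Icc (0:ℝ) 1) := fun j => P.getD j d0 with htdef
  set p : ℕ → Ihat s := fun j => (e.symm (t j)).1 with hpdef
  have hlen : 1 ≤ P.length := List.length_pos_iff.mpr hPne
  have hInOrder : InOrderAlong s γ k p := by
    refine ⟨e, t, ?_, fun i _ => rfl⟩
    intro i j hij hjk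
    exact chain'_getD_mono hP d0 hij (by omega)
  -- per-coordinate jump-sum lower bounds
  have hA : ∀ i : ℕ, s ^ ℓ * (1/s) ^ i ≤ vsum (G i) P := by
    intro i
    have hcomp : ∀ u v, |G 0 u - G 0 v| ≤ s ^ i * |G i u - G i v| := by
      intro u v
      have h := f_iter_lipschitz hs1 i (G i u) (G i v)
      rw [hG0 i u, hG0 i v] at h
      exact h
    have h1 : vsum (G 0) P ≤ s ^ i * vsum (G i) P := vsum_comp hcomp P
    have h2 : s ^ ℓ ≤ s ^ i * vsum (G i) P := le_trans hv h1
    have hsi : (0:ℝ) < s ^ i := by positivity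
    rw [show s ^ ℓ * (1/s) ^ i = s ^ ℓ / s ^ i from by rw [one_div_pow, mul_one_div],
      div_le_iff₀ hsi, mul_comm]
    exact h2
  -- coordinates of the partition points
  have hp_coord : ∀ j i, (p j).1 i = G i (t j) := fun j i => rfl
  have hp01 : ∀ j i, (p j).1 i ∈ Set.Icc (0:ℝ) 1 := fun j i => hGmem i (t j)
  -- summability of each distance series
  have hsumj : ∀ j : ℕ, Summable (fun i : ℕ => |(p j).1 i - (p (j+1)).1 i| / 2 ^ i) := by
    intro j
    apply Summable.of_nonneg_of_le (fun i => by positivity)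
      (fun i => ?_) (summable_geometric_two)
    have h1 := (hp01 j i).1
    have h2 := (hp01 j i).2
    have h3 := (hp01 (j+1) i).1
    have h4 := (hp01 (j+1) i).2
    have habs : |(p j).1 i - (p (j+1)).1 i| ≤ 1 := by
      rw [abs_le]; constructor <;> linarith
    calc |(p j).1 i - (p (j+1)).1 i| / 2 ^ i ≤ 1 / 2 ^ i := by gcongr
      _ = (1/2) ^ i := by rw [one_div_pow]
  -- vsum as a Finset sum over the partition
  have hVs : ∀ g : ↥(Set.Icc (0:ℝ) 1) → ℝ,
      vsum g P = ∑ j ∈ Finset.range k, |g (t (j+1)) - g (t j)| :=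
    fun g => vsum_eq_sum g d0 P hPne
  -- termwise lower bound
  have hterm : ∀ i : ℕ, s ^ ℓ * (1/(2*s)) ^ i ≤
      ∑ j ∈ Finset.range k, |(p j).1 i - (p (j+1)).1 i| / 2 ^ i := by
    intro i
    have h2 : ∑ j ∈ Finset.range k, |(p j).1 i - (p (j+1)).1 i| = vsum (G i) P := by
      rw [hVs (G i)]
      exact Finset.sum_congr rfl fun j _ => abs_sub_comm _ _
    rw [← Finset.sum_div, h2]
    have hexp : s ^ ℓ * (1/(2*s)) ^ i = (s ^ ℓ * (1/s) ^ i) / 2 ^ i := by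
      have hs0 : s ≠ 0 := by linarith
      rw [one_div_pow, one_div_pow, mul_pow]
      field_simp
    rw [hexp]
    gcongr
    exact hA i
  -- geometric series evaluation
  have hrlt : 1/(2*s) < 1 := by
    rw [div_lt_one (by linarith)]; linarith
  have hgeom : ∑' i : ℕ, s ^ ℓ * (1/(2*s)) ^ i = 2 * s / (2 * s - 1) * s ^ ℓ := by
    rw [tsum_mul_left, tsum_geometric_of_lt_one (by positivity) hrlt]
    have h1 : (2*s - 1) ≠ 0 := ne_of_gt (by linarith)
    have h2 : s ≠ 0 := by linarith
    field_simp
  have hsumlow : Summable (fun i : ℕ => s ^ ℓ * (1/(2*s)) ^ i) :=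
    (summable_geometric_of_lt_one (by positivity) hrlt).mul_left _
  have hsumup : Summable (fun i : ℕ =>
      ∑ j ∈ Finset.range k, |(p j).1 i - (p (j+1)).1 i| / 2 ^ i) :=
    (hasSum_sum fun j _ => (hsumj j).hasSum).summable
  have hfinal : 2 * s / (2 * s - 1) * s ^ ℓ ≤
      ∑ j ∈ Finset.range k, dHat s (p j) (p (j+1)) := by
    have hswap : ∑' i : ℕ, ∑ j ∈ Finset.range k, |(p j).1 i - (p (j+1)).1 i| / 2 ^ i
        = ∑ j ∈ Finset.range k, dHat s (p j) (p (j+1)) := by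
      rw [Summable.tsum_finsetSum (fun j _ => hsumj j)]
      rfl
    calc 2 * s / (2 * s - 1) * s ^ ℓ = ∑' i : ℕ, s ^ ℓ * (1/(2*s)) ^ i := hgeom.symm
      _ ≤ ∑' i : ℕ, ∑ j ∈ Finset.range k, |(p j).1 i - (p (j+1)).1 i| / 2 ^ i :=
          Summable.tsum_le_tsum hterm hsumlow hsumup
      _ = _ := hswap
  calc ENNReal.ofReal (2 * s / (2 * s - 1) * s ^ ℓ)
      ≤ ENNReal.ofReal (∑ j ∈ Finset.range k, dHat s (p j) (p (j+1))) :=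
        ENNReal.ofReal_le_ofReal hfinal
    _ ≤ arcLength s γ := by
        rw [arcLength]
        exact le_iSup_of_le k (le_iSup_of_le p (le_iSup_of_le hInOrder le_rfl))

end Tent
end
end

section
/- A path-connected subset S of Î is dense in Î if and only if for every ℓ ≥ 0 there is a flat closed arc γ ⊆ S with π_ℓ(γ) = I. Moreover, if S is dense in Î then S is metrically infinite. -/
open Set MeasureTheory ENNReal Topology

noncomputable section

namespace Tent

section Basic
variable {s : ℝ}

lemma s_pos (hs1 : 1 < s) : 0 < s := lt_trans one_pos hs1

lemma c_pos (hs1 : 1 < s) : 0 < c s := by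
  have hs0 := s_pos hs1
  have : 1 / s < 1 := by rw [div_lt_one hs0]; exact hs1
  unfold c; linarith

lemma c_lt_one (hs1 : 1 < s) : c s < 1 := by
  have hs0 := s_pos hs1
  have : 0 < 1 / s := by positivity
  unfold c; linarith

lemma s_mul_c (hs1 : 1 < s) : s * c s = s - 1 := by
  have hs0 := (s_pos hs1).ne'
  unfold c; field_simp

lemma f_eq_left (hs1 : 1 < s) {x : ℝ} (hx : x ≤ c s) : f s x = s * x + 2 - s := by
  have hs0 := s_pos hs1
  have h1 : s * x ≤ s * c s := by nlinarith
  rw [s_mul_c hs1] at h1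
  unfold f; apply min_eq_left; nlinarith

lemma f_eq_right (hs1 : 1 < s) {x : ℝ} (hx : c s ≤ x) : f s x = s * (1 - x) := by
  have hs0 := s_pos hs1
  have h1 : s * c s ≤ s * x := by nlinarith
  rw [s_mul_c hs1] at h1
  unfold f; apply min_eq_right; nlinarith

lemma f_c (hs1 : 1 < s) : f s (c s) = 1 := by
  have hs0 := (s_pos hs1).ne'
  rw [f_eq_right hs1 le_rfl]; unfold c; field_simp; ring

lemma f_one (hs1 : 1 < s) : f s 1 = 0 := by
  rw [f_eq_right hs1 (c_lt_one hs1).le]; ring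

lemma f_zero (hs1 : 1 < s) : f s 0 = 2 - s := by
  rw [f_eq_left hs1 (c_pos hs1).le]; ring

lemma f_cont : Continuous (f s) := by
  unfold f; fun_prop

lemma f_mem (hs1 : 1 < s) (hs2 : s < 2) {x : ℝ} (hx : x ∈ I) : f s x ∈ I := by
  obtain ⟨hx0, hx1⟩ := hx
  have hs0 := s_pos hs1
  have hsc := s_mul_c hs1
  rcases le_or_gt x (c s) with h | h
  · rw [f_eq_left hs1 h]
    constructor
    · nlinarith
    · nlinarith
  · rw [f_eq_right hs1 h.le]
    constructor
    · nlinarith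
    · nlinarith

lemma f_straddle (hs1 : 1 < s) {a b : ℝ} (hab : f s a = f s b) (hne : a ≠ b) :
    (a < c s ∧ c s < b) ∨ (b < c s ∧ c s < a) := by
  have hs0 := s_pos hs1
  rcases le_or_gt a (c s) with ha | ha <;> rcases le_or_gt b (c s) with hb | hb
  · exfalso
    rw [f_eq_left hs1 ha, f_eq_left hs1 hb] at hab
    apply hne; nlinarith
  · left
    refine ⟨?_, hb⟩
    rcases lt_or_eq_of_le ha with h | h
    · exact h
    · exfalso
      rw [h, f_c hs1, f_eq_right hs1 hb.le] at hab
      have : s * c s < s * b := by nlinarith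
      rw [s_mul_c hs1] at this
      nlinarith
  · right
    refine ⟨?_, ha⟩
    rcases lt_or_eq_of_le hb with h | h
    · exact h
    · exfalso
      rw [h, f_c hs1, f_eq_right hs1 ha.le] at hab
      have : s * c s < s * a := by nlinarith
      rw [s_mul_c hs1] at this
      nlinarith
  · exfalso
    rw [f_eq_right hs1 ha.le, f_eq_right hs1 hb.le] at hab
    apply hne; nlinarith

/-- the right-branch inverse -/
def gm (s y : ℝ) : ℝ := 1 - y / s

lemma gm_mem (hs1 : 1 < s) {y : ℝ} (hy : y ∈ I) : gm s y ∈ Icc (c s) 1 := by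
  have hs0 := s_pos hs1
  obtain ⟨hy0, hy1⟩ := hy
  constructor
  · unfold gm c
    have h : y / s ≤ 1 / s := by gcongr
    linarith
  · unfold gm
    have : 0 ≤ y / s := by positivity
    linarith

lemma f_iter_mem (hs1 : 1 < s) (hs2 : s < 2) (k : ℕ) {x : ℝ} (hx : x ∈ I) :
    (f s)^[k] x ∈ I := by
  induction k generalizing x with
  | zero => simpa using hx
  | succ k ih =>
    rw [Function.iterate_succ_apply]
    exact ih (f_mem hs1 hs2 hx)

lemma I_sub {x : ℝ} (h0 : 0 ≤ x) (h1 : x ≤ 1) : x ∈ I := ⟨h0, h1⟩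

lemma c_mem_s7 (hs1 : 1 < s) : c s ∈ I := ⟨(c_pos hs1).le, (c_lt_one hs1).le⟩

lemma gm_mem_I (hs1 : 1 < s) {y : ℝ} (hy : y ∈ I) : gm s y ∈ I := by
  have h := gm_mem hs1 hy
  exact ⟨le_trans (c_pos hs1).le h.1, h.2⟩

lemma gm_iter_mem (hs1 : 1 < s) (k : ℕ) {y : ℝ} (hy : y ∈ I) : (gm s)^[k] y ∈ I := by
  induction k generalizing y with
  | zero => simpa using hy
  | succ k ih =>
    rw [Function.iterate_succ_apply]
    exact ih (gm_mem_I hs1 hy)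

lemma f_gm (hs1 : 1 < s) {y : ℝ} (hy : y ∈ I) : f s (gm s y) = y := by
  have hs0 := (s_pos hs1).ne'
  rw [f_eq_right hs1 (gm_mem hs1 hy).1]
  unfold gm; field_simp; ring

lemma f_iter_gm (hs1 : 1 < s) (k : ℕ) {y : ℝ} (hy : y ∈ I) : (f s)^[k] ((gm s)^[k] y) = y := by
  induction k generalizing y with
  | zero => simp
  | succ k ih =>
    rw [Function.iterate_succ_apply, Function.iterate_succ_apply']
    rw [f_gm hs1 (gm_iter_mem hs1 k hy)]
    exact ih hy

lemma f_iter_surj (hs1 : 1 < s) (m : ℕ) {y : ℝ} (hy : y ∈ I) :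
    ∃ x ∈ I, (f s)^[m] x = y :=
  ⟨(gm s)^[m] y, gm_iter_mem hs1 m hy, f_iter_gm hs1 m hy⟩

lemma coord_mem (z : Ihat s) (i : ℕ) : z.1 i ∈ I := z.2.1 i

lemma coord_rel (z : Ihat s) (i : ℕ) : f s (z.1 (i + 1)) = z.1 i := z.2.2 i

lemma coord_down (z : Ihat s) (i k : ℕ) : z.1 i = (f s)^[k] (z.1 (i + k)) := by
  induction k with
  | zero => simp
  | succ k ih =>
    rw [ih, show i + (k + 1) = (i + k) + 1 from rfl]
    rw [← coord_rel z (i + k), Function.iterate_succ_apply]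

/-- existence of a point of `Î` with prescribed coordinate `n`. -/
lemma exists_point (hs1 : 1 < s) (hs2 : s < 2) (n : ℕ) {v : ℝ} (hv : v ∈ I) :
    ∃ z : Ihat s, z.1 n = v := by
  classical
  refine ⟨⟨fun i => if i ≤ n then (f s)^[n - i] v else (gm s)^[i - n] v, ?_, ?_⟩, ?_⟩
  · intro i
    by_cases h : i ≤ n
    · simp only [h, if_true]
      exact f_iter_mem hs1 hs2 _ hv
    · simp only [h, if_false]
      exact gm_iter_mem hs1 _ hv
  · intro i
    by_cases h : i + 1 ≤ n
    · have hi : i ≤ n := by omega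
      simp only [h, if_true, hi, if_true]
      rw [show n - i = (n - (i+1)) + 1 from by omega, Function.iterate_succ_apply']
    · by_cases h2 : i ≤ n
      · have hin : i = n := by omega
        subst hin
        simp only [h, if_false, if_true, show i + 1 - i = 1 from by omega, le_refl]
        rw [Function.iterate_one, Nat.sub_self, Function.iterate_zero_apply]
        exact f_gm hs1 hv
      · simp only [h, if_false, h2, if_false]
        rw [show i + 1 - n = (i - n) + 1 from by omega, Function.iterate_succ_apply']
        exact f_gm hs1 (gm_iter_mem hs1 _ hv)
  · simp

/-- `x* = 1 - c/s`, the right preimage of `c`. -/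
def xs (s : ℝ) : ℝ := 1 - c s / s

lemma c_lt_xs (hs1 : 1 < s) : c s < xs s := by
  have hs0 := s_pos hs1
  have h : xs s - c s = 1 / s ^ 2 := by
    unfold xs c; field_simp; ring
  have h2 : 0 < 1 / s ^ 2 := by positivity
  linarith

lemma xs_lt_one (hs1 : 1 < s) : xs s < 1 := by
  have hs0 := s_pos hs1
  have : 0 < c s / s := div_pos (c_pos hs1) hs0
  unfold xs; linarith

lemma xs_mem (hs1 : 1 < s) : xs s ∈ I :=
  ⟨le_trans (c_pos hs1).le (c_lt_xs hs1).le, (xs_lt_one hs1).le⟩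

lemma f_xs (hs1 : 1 < s) : f s (xs s) = c s := by
  have hs0 := (s_pos hs1).ne'
  rw [f_eq_right hs1 (c_lt_xs hs1).le]
  unfold xs; field_simp; ring

/-- the affine relation two coordinates below, over the window `[c, x*]`. -/
lemma phirel (hs1 : 1 < s) (z : Ihat s) (l : ℕ)
    (hz : z.1 (l + 2) ∈ Icc (c s) (xs s)) :
    z.1 l = s - s ^ 2 + s ^ 2 * z.1 (l + 2) := by
  have hs0 := s_pos hs1
  have h1 : z.1 (l + 1) = s * (1 - z.1 (l + 2)) := by
    rw [← coord_rel z (l + 1), f_eq_right hs1 hz.1]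
  have h2 : c s ≤ z.1 (l + 1) := by
    rw [h1]
    have := hz.2
    have hfx : s * (1 - xs s) = c s := by
      have := f_xs hs1; rwa [f_eq_right hs1 (c_lt_xs hs1).le] at this
    nlinarith
  have h0 : z.1 l = s * (1 - z.1 (l + 1)) := by
    rw [← coord_rel z l, f_eq_right hs1 h2]
  rw [h0, h1]; ring

lemma image_iter_succ (m : ℕ) (B : Set ℝ) :
    (f s)^[m + 1] '' B = f s '' ((f s)^[m] '' B) := by
  rw [Function.iterate_succ', Set.image_comp]

lemma fimg_right (hs1 : 1 < s) {a b : ℝ} (hca : c s ≤ a) (hab : a ≤ b) :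
    Icc (s * (1 - b)) (s * (1 - a)) ⊆ f s '' Icc a b := by
  have h := intermediate_value_Icc' hab ((f_cont : Continuous (f s)).continuousOn)
  rwa [f_eq_right hs1 hca, f_eq_right hs1 (le_trans hca hab)] at h

lemma fimg_left (hs1 : 1 < s) {a b : ℝ} (hab : a ≤ b) (hbc : b ≤ c s) :
    Icc (s * a + 2 - s) (s * b + 2 - s) ⊆ f s '' Icc a b := by
  have h := intermediate_value_Icc hab ((f_cont : Continuous (f s)).continuousOn)
  rwa [f_eq_left hs1 (le_trans hab hbc), f_eq_left hs1 hbc] at h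

lemma s_one_sub_c (hs1 : 1 < s) : s * (1 - c s) = 1 := by
  have hs0 := (s_pos hs1).ne'
  unfold c; field_simp; ring

lemma full_step (hs1 : 1 < s) {x : ℝ} {m : ℕ} {B : Set ℝ} (hx : x ≤ c s)
    (h : Icc x 1 ⊆ (f s)^[m] '' B) : Icc (0 : ℝ) 1 ⊆ (f s)^[m + 1] '' B := by
  rw [image_iter_succ]
  have h1 : Icc (0:ℝ) 1 ⊆ f s '' Icc (c s) 1 := by
    have := fimg_right hs1 (le_refl (c s)) (c_lt_one hs1).le
    rw [s_one_sub_c hs1] at this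
    simpa using this
  have h2 : Icc (c s) 1 ⊆ Icc x 1 := Icc_subset_Icc hx le_rfl
  exact h1.trans ((Set.image_mono h2).trans (Set.image_mono h))

lemma goalK (hs1 : 1 < s) (hs2 : s < 2) (hss : 2 < s ^ 2) :
    ∃ K, Icc (0:ℝ) 1 ⊆ (f s)^[K] '' Icc (2 - s) 1 := by
  have hs0 := s_pos hs1
  set q : ℝ := s / (s + 1) with hqdef
  set e0 : ℝ := q - (2 - s) with he0def
  have hsp1 : (0:ℝ) < s + 1 := by linarith
  have he0 : 0 < e0 := by
    rw [he0def, hqdef, sub_pos, lt_div_iff₀ hsp1]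
    nlinarith
  have hcq : c s < q := by
    have h : q - c s = 1 / (s * (s + 1)) := by
      rw [hqdef]; unfold c; field_simp; ring
    have : (0:ℝ) < 1 / (s * (s + 1)) := by positivity
    linarith
  have hq1 : q < 1 := by
    rw [hqdef, div_lt_one hsp1]; linarith
  have hfixq : s * (1 - q) = q := by
    rw [hqdef]; field_simp; ring
  have key : ∀ n : ℕ, (∃ m, Icc (0:ℝ) 1 ⊆ (f s)^[m] '' Icc (2 - s) 1) ∨
      (∃ m, ∃ x : ℝ, c s < x ∧ x ≤ q - e0 * (s ^ 2) ^ n ∧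
        Icc x 1 ⊆ (f s)^[m] '' Icc (2 - s) 1) := by
    intro n
    induction n with
    | zero =>
      rcases le_or_gt (2 - s) (c s) with h | h
      · left
        refine ⟨1, full_step hs1 h ?_⟩
        simp
      · right
        refine ⟨0, 2 - s, h, by rw [pow_zero, mul_one, he0def]; linarith, by simp⟩
    | succ n ih =>
      rcases ih with h | ⟨m, x, hcx, hxb, him⟩
      · left; exact h
      have hpow : (0:ℝ) < (s ^ 2) ^ n := by positivity
      have hxq : x ≤ q := by nlinarith
      set y : ℝ := s * (1 - x) with hy
      have hqy : q ≤ y := by nlinarith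
      have hy1 : y ≤ 1 := by
        have h1 := s_one_sub_c hs1
        nlinarith
      have hcy : c s ≤ y := le_trans hcq.le hqy
      have hx1 : x ≤ 1 := le_trans hxq hq1.le
      have h1 : Icc (0:ℝ) y ⊆ f s '' Icc x 1 := by
        have h := fimg_right hs1 hcx.le hx1
        have he : s * (1 - (1:ℝ)) = 0 := by ring
        rwa [he] at h
      set x' : ℝ := min (2 - s) (s * (1 - y)) with hx'def
      have h2 : Icc x' 1 ⊆ f s '' Icc 0 y := by
        rcases le_total (2 - s) (s * (1 - y)) with hmm | hmm
        · have hset : Icc x' 1 = Icc (2 - s) 1 := by rw [hx'def, min_eq_left hmm]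
          rw [hset]
          have hsub : Icc (0:ℝ) (c s) ⊆ Icc 0 y := Icc_subset_Icc le_rfl hcy
          refine subset_trans ?_ (Set.image_mono hsub)
          have h := fimg_left hs1 (c_pos hs1).le le_rfl
          have e1 : s * 0 + 2 - s = 2 - s := by ring
          have e2 : s * c s + 2 - s = 1 := by rw [s_mul_c hs1]; ring
          rwa [e1, e2] at h
        · have hset : Icc x' 1 = Icc (s * (1 - y)) 1 := by rw [hx'def, min_eq_right hmm]
          rw [hset]
          have hsub : Icc (c s) y ⊆ Icc 0 y := Icc_subset_Icc (c_pos hs1).le le_rfl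
          refine subset_trans ?_ (Set.image_mono hsub)
          have h := fimg_right hs1 (le_refl (c s)) hcy
          rwa [s_one_sub_c hs1] at h
      have him2 : Icc x' 1 ⊆ (f s)^[m + 2] '' Icc (2 - s) 1 := by
        rw [image_iter_succ, image_iter_succ]
        refine h2.trans (Set.image_mono ?_)
        refine h1.trans (Set.image_mono him)
      rcases le_or_gt x' (c s) with h | h
      · left
        exact ⟨m + 3, full_step hs1 h him2⟩
      · right
        refine ⟨m + 2, x', h, ?_, him2⟩
        have hb1 : x' ≤ s * (1 - y) := min_le_right _ _
        have hb2 : s * (1 - y) = s - s ^ 2 + s ^ 2 * x := by rw [hy]; ring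
        have hb3 : s - s ^ 2 + s ^ 2 * q = q := by
          rw [hqdef]; field_simp; ring
        have hb4 : s ^ 2 * x ≤ s ^ 2 * (q - e0 * (s ^ 2) ^ n) := by nlinarith
        calc x' ≤ s - s ^ 2 + s ^ 2 * x := by rw [← hb2]; exact hb1
        _ ≤ s - s ^ 2 + s ^ 2 * (q - e0 * (s ^ 2) ^ n) := by linarith
        _ = q - e0 * (s ^ 2) ^ (n + 1) := by linear_combination hb3
  obtain ⟨n, hn⟩ := pow_unbounded_of_one_lt ((q - c s) / e0) (by nlinarith : (1:ℝ) < s ^ 2)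
  rcases key n with ⟨m, hm⟩ | ⟨m, x, hcx, hxb, _⟩
  · exact ⟨m, hm⟩
  · exfalso
    have : (q - c s) / e0 * e0 < (s ^ 2) ^ n * e0 := by
      exact mul_lt_mul_of_pos_right hn he0
    rw [div_mul_cancel₀ _ he0.ne'] at this
    nlinarith

/-- the left-branch inverse -/
def hm (s y : ℝ) : ℝ := (y - 2 + s) / s

lemma hm_mem (hs1 : 1 < s) {y : ℝ} (hy : y ∈ Icc (2 - s) 1) : hm s y ∈ Icc 0 (c s) := by
  have hs0 := s_pos hs1
  constructor
  · apply div_nonneg _ hs0.le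
    linarith [hy.1]
  · rw [hm, div_le_iff₀ hs0]
    have := s_mul_c hs1
    nlinarith [hy.2]

lemma f_hm (hs1 : 1 < s) {y : ℝ} (hy : y ∈ Icc (2 - s) 1) : f s (hm s y) = y := by
  have hs0 := (s_pos hs1).ne'
  rw [f_eq_left hs1 (hm_mem hs1 hy).2]
  unfold hm; field_simp; ring

lemma gm_anti (hs1 : 1 < s) : Antitone (gm s) := by
  intro y y' h
  unfold gm
  have hs0 := s_pos hs1
  have : y / s ≤ y' / s := by gcongr
  linarith

lemma var_partition (hs1 : 1 < s) (hs2 : s < 2) (hss : 2 < s ^ 2) :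
    ∃ K : ℕ, ∀ n : ℕ, ∃ (k : ℕ) (w : ℕ → ℝ), Monotone w ∧ (∀ i, w i ∈ I) ∧
      (n : ℝ) ≤ ∑ i ∈ Finset.range k, |(f s)^[K + n] (w (i + 1)) - (f s)^[K + n] (w i)| := by
  obtain ⟨K, hK⟩ := goalK hs1 hs2 hss
  refine ⟨K, ?_⟩
  intro n
  induction n with
  | zero =>
    exact ⟨0, fun _ => 0, monotone_const, fun _ => ⟨le_rfl, zero_le_one⟩, by simp⟩
  | succ n ih =>
    obtain ⟨k, w, hwmono, hwI, hsum⟩ := ih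
    obtain ⟨y0, hy0I, hy0⟩ := f_iter_surj hs1 n (show (0:ℝ) ∈ I from ⟨le_rfl, zero_le_one⟩)
    obtain ⟨y1, hy1I, hy1⟩ := f_iter_surj hs1 n (show (1:ℝ) ∈ I from ⟨zero_le_one, le_rfl⟩)
    obtain ⟨a, haM, ha⟩ := hK hy0I
    obtain ⟨b, hbM, hb⟩ := hK hy1I
    have fa : (f s)^[K + n] a = 0 := by
      rw [add_comm, Function.iterate_add_apply, ha, hy0]
    have fb : (f s)^[K + n] b = 1 := by
      rw [add_comm, Function.iterate_add_apply, hb, hy1]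
    -- the new partition
    set w' : ℕ → ℝ := fun i => match i with
      | 0 => (0:ℝ)
      | 1 => min (hm s a) (hm s b)
      | 2 => max (hm s a) (hm s b)
      | (j+3) => gm s (w (k - j)) with hw'
    have hw'0 : w' 0 = 0 := rfl
    have hw'1 : w' 1 = min (hm s a) (hm s b) := rfl
    have hw'2 : w' 2 = max (hm s a) (hm s b) := rfl
    have hw'3 : ∀ j, w' (j + 3) = gm s (w (k - j)) := fun j => rfl
    have hma := hm_mem hs1 haM
    have hmb := hm_mem hs1 hbM
    have hmono : Monotone w' := by
      apply monotone_nat_of_le_succ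
      intro i
      match i with
      | 0 => exact le_min hma.1 hmb.1
      | 1 => exact min_le_max
      | 2 =>
        have e : w' (2 + 1) = gm s (w (k - 0)) := rfl
        rw [hw'2, e]
        exact le_trans (max_le hma.2 hmb.2) (gm_mem hs1 (hwI _)).1
      | (j+3) =>
        have e : w' (j + 3 + 1) = gm s (w (k - (j + 1))) := rfl
        rw [hw'3, e]
        exact gm_anti hs1 (hwmono (by omega : k - (j+1) ≤ k - j))
    have hmemI : ∀ i, w' i ∈ I := by
      intro i
      have hcI := c_mem_s7 hs1
      match i with
      | 0 => exact ⟨le_rfl, zero_le_one⟩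
      | 1 => exact ⟨le_min hma.1 hmb.1, le_trans (min_le_left _ _) (le_trans hma.2 hcI.2)⟩
      | 2 => exact ⟨le_trans hma.1 (le_max_left _ _), max_le (le_trans hma.2 hcI.2) (le_trans hmb.2 hcI.2)⟩
      | (j+3) => exact gm_mem_I hs1 (hwI _)
    refine ⟨k + 3, w', hmono, hmemI, ?_⟩
    have hKn1 : K + (n + 1) = (K + n) + 1 := by ring
    rw [hKn1]
    set T : ℕ → ℝ := fun i => |(f s)^[(K+n)+1] (w' (i + 1)) - (f s)^[(K+n)+1] (w' i)| with hT
    have e_hm : ∀ y ∈ Icc (2 - s) 1, (f s)^[(K+n)+1] (hm s y) = (f s)^[K+n] y := by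
      intro y hy
      rw [Function.iterate_succ_apply, f_hm hs1 hy]
    have e_gm : ∀ y ∈ I, (f s)^[(K+n)+1] (gm s y) = (f s)^[K+n] y := by
      intro y hy
      rw [Function.iterate_succ_apply, f_gm hs1 hy]
    have hT1 : T 1 = 1 := by
      rw [hT]
      simp only [hw'1, hw'2]
      rcases le_total (hm s a) (hm s b) with h | h
      · rw [min_eq_left h, max_eq_right h, e_hm a haM, e_hm b hbM, fa, fb]
        norm_num
      · rw [min_eq_right h, max_eq_left h, e_hm a haM, e_hm b hbM, fa, fb]
        norm_num
    have hTs : ∀ j < k, T (3 + j) = |(f s)^[K+n] (w (k - j - 1)) - (f s)^[K+n] (w (k - j))| := by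
      intro j hj
      rw [hT]
      have e1 : 3 + j = j + 3 := by omega
      have e2 : 3 + j + 1 = (j + 1) + 3 := by omega
      simp only [e1, e2, hw'3]
      rw [e_gm _ (hwI _), e_gm _ (hwI _)]
      rw [show k - (j + 1) = k - j - 1 from by omega]
    have h1 : ∑ i ∈ Finset.Ico 3 (k + 3), T i = ∑ j ∈ Finset.range k, T (3 + j) := by
      rw [Finset.sum_Ico_eq_sum_range]
      congr 1
    have h2 : ∑ i ∈ Finset.Ico 0 3, T i = T 0 + T 1 + T 2 := by
      rw [← Finset.range_eq_Ico]
      rw [Finset.sum_range_succ, Finset.sum_range_succ, Finset.sum_range_one]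
    have split : ∑ i ∈ Finset.range (k + 3), T i
        = (T 0 + T 1 + T 2) + ∑ j ∈ Finset.range k, T (3 + j) := by
      rw [Finset.range_eq_Ico, ← Finset.sum_Ico_consecutive T (by omega : 0 ≤ 3) (by omega : 3 ≤ k + 3), h1, h2,
        Finset.range_eq_Ico]
    have reflect : ∑ j ∈ Finset.range k, T (3 + j)
        = ∑ i ∈ Finset.range k, |(f s)^[K+n] (w (i + 1)) - (f s)^[K+n] (w i)| := by
      rw [← Finset.sum_range_reflect (fun i => |(f s)^[K+n] (w (i + 1)) - (f s)^[K+n] (w i)|) k]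
      apply Finset.sum_congr rfl
      intro j hj
      have hjk : j < k := Finset.mem_range.mp hj
      rw [hTs j hjk]
      rw [show k - 1 - j + 1 = k - j from by omega, show k - 1 - j = k - j - 1 from by omega]
      rw [abs_sub_comm]
    rw [split, reflect]
    have h0 : 0 ≤ T 0 := abs_nonneg _
    have h2 : 0 ≤ T 2 := abs_nonneg _
    push_cast
    linarith

lemma master (hs1 : 1 < s) (hs2 : s < 2) {S : Set (Ihat s)} (hD : Dense S)
    (hS : IsPathConnected S) (l : ℕ) :
    ∃ γ : Set (Ihat s), γ ⊆ S ∧ IsClosedArc s γ ∧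
      MFlatOver s (l + 2) γ (Icc (c s) (xs s)) ∧
      (fun z : Ihat s => z.1 l) '' γ = I := by
  classical
  have hs0 := s_pos hs1
  have hc0 := c_pos hs1
  have hc1 := c_lt_one hs1
  have hcx := c_lt_xs hs1
  have hx1 := xs_lt_one hs1
  have hcoord : Continuous fun z : Ihat s => z.1 (l + 2) :=
    (continuous_apply (l + 2)).comp continuous_subtype_val
  obtain ⟨zU, hzU⟩ : ∃ z : Ihat s, z.1 (l + 2) = c s / 2 :=
    exists_point hs1 hs2 _ ⟨by positivity, by linarith⟩
  obtain ⟨zV, hzV⟩ : ∃ z : Ihat s, z.1 (l + 2) = (xs s + 1) / 2 :=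
    exists_point hs1 hs2 _ ⟨by nlinarith, by linarith⟩
  obtain ⟨x, hxU, hxS⟩ := hD.inter_open_nonempty {z : Ihat s | z.1 (l + 2) < c s}
    (isOpen_lt hcoord continuous_const) ⟨zU, by simp only [Set.mem_setOf_eq, hzU]; linarith⟩
  obtain ⟨y, hyV, hyS⟩ := hD.inter_open_nonempty {z : Ihat s | xs s < z.1 (l + 2)}
    (isOpen_lt continuous_const hcoord) ⟨zV, by simp only [Set.mem_setOf_eq, hzV]; linarith⟩
  simp only [Set.mem_setOf_eq] at hxU hyV
  obtain ⟨p, hp⟩ := hS.joinedIn x hxS y hyS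
  set F : ℝ → Ihat s := ⇑p.extend with hF
  have hFcont : Continuous F := p.continuous_extend
  have hFS : ∀ t ∈ Icc (0:ℝ) 1, F t ∈ S := by
    intro t ht
    rw [hF, p.extend_apply ht]
    exact hp _
  set A : ℕ → ℝ → ℝ := fun j t => (F t).1 (l + 2 + j) with hA
  have hAcont : ∀ j, Continuous (A j) :=
    fun j => (continuous_apply _).comp (continuous_subtype_val.comp hFcont)
  have hAmem : ∀ j t, A j t ∈ I := fun j t => (F t).2.1 _
  have hArel : ∀ j t, f s (A (j + 1) t) = A j t := fun j t => (F t).2.2 (l + 2 + j)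
  have hG0 : A 0 0 < c s := by
    show (F 0).1 (l + 2 + 0) < c s
    rw [hF, Path.extend_zero]
    exact hxU
  have hG1 : xs s < A 0 1 := by
    show xs s < (F 1).1 (l + 2 + 0)
    rw [hF, Path.extend_one]
    exact hyV
  set H1 : Set ℝ := {t | t ∈ Icc (0:ℝ) 1 ∧ A 0 t = xs s} with hH1
  have hH1cl : IsClosed H1 := by
    have h : H1 = Icc (0:ℝ) 1 ∩ {t | A 0 t = xs s} := rfl
    rw [h]
    exact isClosed_Icc.inter (isClosed_eq (hAcont 0) continuous_const)
  have hH1ne : H1.Nonempty := by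
    obtain ⟨t, ht, hv⟩ := intermediate_value_Icc (zero_le_one) ((hAcont 0).continuousOn)
      (⟨le_trans hG0.le hcx.le, hG1.le⟩ : xs s ∈ Icc (A 0 0) (A 0 1))
    exact ⟨t, ht, hv⟩
  have hH1bd : BddBelow H1 := ⟨0, fun t ht => ht.1.1⟩
  set t1 : ℝ := sInf H1 with ht1def
  have ht1 : t1 ∈ H1 := hH1cl.csInf_mem hH1ne hH1bd
  have ht1v : A 0 t1 = xs s := ht1.2
  have ht1mem : t1 ∈ Icc (0:ℝ) 1 := ht1.1
  have hlt1 : ∀ t ∈ Icc (0:ℝ) 1, t < t1 → A 0 t < xs s := by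
    intro t ht htl
    by_contra hge
    push_neg at hge
    obtain ⟨t', ht', hv'⟩ := intermediate_value_Icc ht.1 ((hAcont 0).continuousOn)
      (⟨le_trans hG0.le hcx.le, hge⟩ : xs s ∈ Icc (A 0 0) (A 0 t))
    have hle : t1 ≤ t' := csInf_le hH1bd ⟨⟨ht'.1, le_trans ht'.2 ht.2⟩, hv'⟩
    linarith [ht'.2]
  set H0 : Set ℝ := {t | t ∈ Icc (0:ℝ) t1 ∧ A 0 t = c s} with hH0
  have hH0cl : IsClosed H0 := by
    have h : H0 = Icc (0:ℝ) t1 ∩ {t | A 0 t = c s} := rfl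
    rw [h]
    exact isClosed_Icc.inter (isClosed_eq (hAcont 0) continuous_const)
  have hH0ne : H0.Nonempty := by
    obtain ⟨t, ht, hv⟩ := intermediate_value_Icc ht1mem.1 ((hAcont 0).continuousOn)
      (⟨hG0.le, by rw [ht1v]; exact hcx.le⟩ : c s ∈ Icc (A 0 0) (A 0 t1))
    exact ⟨t, ht, hv⟩
  have hH0bd : BddAbove H0 := ⟨t1, fun t ht => ht.1.2⟩
  set t0 : ℝ := sSup H0 with ht0def
  have ht0 : t0 ∈ H0 := hH0cl.csSup_mem hH0ne hH0bd
  have ht0v : A 0 t0 = c s := ht0.2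
  have ht0mem : t0 ∈ Icc (0:ℝ) t1 := ht0.1
  have ht01 : t0 < t1 := by
    rcases lt_or_eq_of_le ht0mem.2 with h | h
    · exact h
    · exfalso
      rw [h, ht1v] at ht0v
      exact hcx.ne' ht0v
  have hint : ∀ t ∈ Ioo t0 t1, c s < A 0 t ∧ A 0 t < xs s := by
    intro t ht
    have htI : t ∈ Icc (0:ℝ) 1 :=
      ⟨le_trans ht0mem.1 ht.1.le, le_trans ht.2.le ht1mem.2⟩
    constructor
    · by_contra hle
      push_neg at hle
      obtain ⟨t', ht', hv'⟩ := intermediate_value_Icc ht.2.le ((hAcont 0).continuousOn)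
        (⟨hle, by rw [ht1v]; exact hcx.le⟩ : c s ∈ Icc (A 0 t) (A 0 t1))
      have hle2 : t' ≤ t0 := le_csSup hH0bd ⟨⟨le_trans htI.1 ht'.1, ht'.2⟩, hv'⟩
      linarith [ht'.1, ht.1]
    · exact hlt1 t htI ht.2
  -- the inductive invariant
  have hInv : ∀ j, ∃ u v : ℝ, u < v ∧ u ∈ I ∧ v ∈ I ∧
      ((A j t0 = u ∧ A j t1 = v) ∨ (A j t0 = v ∧ A j t1 = u)) ∧
      ∀ t ∈ Ioo t0 t1, A j t ∈ Ioo u v := by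
    intro j
    induction j with
    | zero =>
      exact ⟨c s, xs s, hcx, c_mem_s7 hs1, xs_mem hs1, Or.inl ⟨ht0v, ht1v⟩,
        fun t ht => ⟨(hint t ht).1, (hint t ht).2⟩⟩
    | succ j ih =>
      obtain ⟨u, v, huv, huI, hvI, hend, hio⟩ := ih
      have ht0I : t0 ∈ Icc t0 t1 := ⟨le_rfl, ht01.le⟩
      have ht1I : t1 ∈ Icc t0 t1 := ⟨ht01.le, le_rfl⟩
      have K1 : ∀ t ∈ Ioo t0 t1, A (j + 1) t ≠ c s := by
        intro t ht hc
        have h1 : A j t = 1 := by rw [← hArel j t, hc, f_c hs1]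
        have h2 := (hio t ht).2
        rw [h1] at h2
        linarith [hvI.2]
      have htm : (t0 + t1) / 2 ∈ Ioo t0 t1 := ⟨by linarith, by linarith⟩
      rcases (K1 _ htm).lt_or_gt with hside | hside
      · -- left branch: A (j+1) < c on the interior
        have hneg : ∀ t ∈ Ioo t0 t1, A (j + 1) t < c s := by
          intro t ht
          rcases (K1 t ht).lt_or_gt with h | h
          · exact h
          · exfalso
            have hmem : c s ∈ uIcc (A (j + 1) ((t0 + t1) / 2)) (A (j + 1) t) := by
              rw [Set.mem_uIcc]; left; exact ⟨hside.le, h.le⟩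
            obtain ⟨t', ht', hv'⟩ :=
              intermediate_value_uIcc ((hAcont (j + 1)).continuousOn) hmem
            exact K1 t' (ordConnected_Ioo.uIcc_subset htm ht ht') hv'
        have hle : ∀ t ∈ Icc t0 t1, A (j + 1) t ≤ c s := by
          have hsub : Icc t0 t1 ⊆ {t | A (j + 1) t ≤ c s} := by
            rw [← closure_Ioo ht01.ne]
            exact closure_minimal (fun t ht => (hneg t ht).le)
              (isClosed_le (hAcont _) continuous_const)
          exact fun t ht => hsub ht
        have heq : ∀ t ∈ Icc t0 t1, A (j + 1) t = (A j t - 2 + s) / s := by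
          intro t ht
          have h := hArel j t
          rw [f_eq_left hs1 (hle t ht)] at h
          field_simp
          linarith
        have hmono : ∀ {a b : ℝ}, a < b → (a - 2 + s) / s < (b - 2 + s) / s := by
          intro a b h
          rw [div_lt_div_iff₀ hs0 hs0]
          nlinarith
        rcases hend with ⟨h0, h1⟩ | ⟨h0, h1⟩
        · refine ⟨(u - 2 + s) / s, (v - 2 + s) / s, hmono huv, ?_, ?_, Or.inl ⟨?_, ?_⟩, ?_⟩
          · have h := hAmem (j + 1) t0; rwa [heq t0 ht0I, h0] at h
          · have h := hAmem (j + 1) t1; rwa [heq t1 ht1I, h1] at h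
          · rw [heq t0 ht0I, h0]
          · rw [heq t1 ht1I, h1]
          · intro t ht
            have h := heq t (Ioo_subset_Icc_self ht)
            have h2 := hio t ht
            rw [h]
            exact ⟨hmono h2.1, hmono h2.2⟩
        · refine ⟨(u - 2 + s) / s, (v - 2 + s) / s, hmono huv, ?_, ?_, Or.inr ⟨?_, ?_⟩, ?_⟩
          · have h := hAmem (j + 1) t1; rwa [heq t1 ht1I, h1] at h
          · have h := hAmem (j + 1) t0; rwa [heq t0 ht0I, h0] at h
          · rw [heq t0 ht0I, h0]
          · rw [heq t1 ht1I, h1]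
          · intro t ht
            have h := heq t (Ioo_subset_Icc_self ht)
            have h2 := hio t ht
            rw [h]
            exact ⟨hmono h2.1, hmono h2.2⟩
      · -- right branch: A (j+1) > c on the interior
        have hpos : ∀ t ∈ Ioo t0 t1, c s < A (j + 1) t := by
          intro t ht
          rcases (K1 t ht).lt_or_gt with h | h
          · exfalso
            have hmem : c s ∈ uIcc (A (j + 1) ((t0 + t1) / 2)) (A (j + 1) t) := by
              rw [Set.mem_uIcc]; right; exact ⟨h.le, hside.le⟩
            obtain ⟨t', ht', hv'⟩ :=
              intermediate_value_uIcc ((hAcont (j + 1)).continuousOn) hmem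
            exact K1 t' (ordConnected_Ioo.uIcc_subset htm ht ht') hv'
          · exact h
        have hge : ∀ t ∈ Icc t0 t1, c s ≤ A (j + 1) t := by
          have hsub : Icc t0 t1 ⊆ {t | c s ≤ A (j + 1) t} := by
            rw [← closure_Ioo ht01.ne]
            exact closure_minimal (fun t ht => (hpos t ht).le)
              (isClosed_le continuous_const (hAcont _))
          exact fun t ht => hsub ht
        have heq : ∀ t ∈ Icc t0 t1, A (j + 1) t = (s - A j t) / s := by
          intro t ht
          have h := hArel j t
          rw [f_eq_right hs1 (hge t ht)] at h
          field_simp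
          linarith
        have hmono : ∀ {a b : ℝ}, a < b → (s - b) / s < (s - a) / s := by
          intro a b h
          rw [div_lt_div_iff₀ hs0 hs0]
          nlinarith
        rcases hend with ⟨h0, h1⟩ | ⟨h0, h1⟩
        · refine ⟨(s - v) / s, (s - u) / s, hmono huv, ?_, ?_, Or.inr ⟨?_, ?_⟩, ?_⟩
          · have h := hAmem (j + 1) t1; rwa [heq t1 ht1I, h1] at h
          · have h := hAmem (j + 1) t0; rwa [heq t0 ht0I, h0] at h
          · rw [heq t0 ht0I, h0]
          · rw [heq t1 ht1I, h1]
          · intro t ht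
            have h := heq t (Ioo_subset_Icc_self ht)
            have h2 := hio t ht
            rw [h]
            exact ⟨hmono h2.2, hmono h2.1⟩
        · refine ⟨(s - v) / s, (s - u) / s, hmono huv, ?_, ?_, Or.inl ⟨?_, ?_⟩, ?_⟩
          · have h := hAmem (j + 1) t0; rwa [heq t0 ht0I, h0] at h
          · have h := hAmem (j + 1) t1; rwa [heq t1 ht1I, h1] at h
          · rw [heq t0 ht0I, h0]
          · rw [heq t1 ht1I, h1]
          · intro t ht
            have h := heq t (Ioo_subset_Icc_self ht)
            have h2 := hio t ht
            rw [h]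
            exact ⟨hmono h2.2, hmono h2.1⟩
  have NOC : ∀ j, ∀ t ∈ Ioo t0 t1, A j t ≠ c s := by
    intro j
    cases j with
    | zero => exact fun t ht => ne_of_gt (hint t ht).1
    | succ j =>
      intro t ht hc
      obtain ⟨u, v, huv, huI, hvI, hend, hio⟩ := hInv j
      have h1 : A j t = 1 := by rw [← hArel j t, hc, f_c hs1]
      have h2 := (hio t ht).2
      rw [h1] at h2
      linarith [hvI.2]
  -- the arc
  set γ : Set (Ihat s) := F '' Icc t0 t1 with hγ
  have hγS : γ ⊆ S := by
    rintro _ ⟨t, ht, rfl⟩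
    exact hFS t ⟨le_trans ht0mem.1 ht.1, le_trans ht.2 ht1mem.2⟩
  -- image at level l+2
  have himg2 : (fun z : Ihat s => z.1 (l + 2)) '' γ = Icc (c s) (xs s) := by
    rw [hγ, Set.image_image]
    apply Set.Subset.antisymm
    · rintro _ ⟨t, ht, rfl⟩
      show (F t).1 (l + 2) ∈ Icc (c s) (xs s)
      have hh : (F t).1 (l + 2) = A 0 t := rfl
      rw [hh]
      rcases eq_or_lt_of_le ht.1 with h | h
      · rw [← h, ht0v]; exact ⟨le_rfl, hcx.le⟩
      · rcases eq_or_lt_of_le ht.2 with h' | h'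
        · rw [h', ht1v]; exact ⟨hcx.le, le_rfl⟩
        · exact ⟨(hint t ⟨h, h'⟩).1.le, (hint t ⟨h, h'⟩).2.le⟩
    · intro u hu
      obtain ⟨t, ht, hv⟩ := intermediate_value_Icc ht01.le ((hAcont 0).continuousOn)
        (by rw [ht0v, ht1v]; exact hu)
      exact ⟨t, ht, hv⟩
  have hzmem : ∀ z : Ihat s, z ∈ γ → z.1 (l + 2) ∈ Icc (c s) (xs s) := by
    intro z hz
    have := Set.mem_image_of_mem (fun z : Ihat s => z.1 (l + 2)) hz
    rwa [himg2] at this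
  -- injectivity of the (l+2)-projection on γ
  have hinj : Set.InjOn (fun z : Ihat s => z.1 (l + 2)) γ := by
    rintro _ ⟨tz, htz, rfl⟩ _ ⟨tw, htw, rfl⟩ heq0
    simp only at heq0
    have hall : ∀ j, (F tz).1 (l + 2 + j) = (F tw).1 (l + 2 + j) := by
      by_contra hcon
      push_neg at hcon
      obtain ⟨j0, hj0⟩ := hcon
      have hex : ∃ j, (F tz).1 (l + 2 + j) ≠ (F tw).1 (l + 2 + j) := ⟨j0, hj0⟩
      set jm := Nat.find hex with hjmdef
      have hne := Nat.find_spec hex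
      rw [← hjmdef] at hne
      have hjm0 : jm ≠ 0 := by
        intro h
        rw [h] at hne
        exact hne heq0
      obtain ⟨jp, hjp⟩ := Nat.exists_eq_succ_of_ne_zero hjm0
      have hprev : (F tz).1 (l + 2 + jp) = (F tw).1 (l + 2 + jp) :=
        not_not.mp (Nat.find_min hex (by omega))
      have hfz : f s ((F tz).1 (l + 2 + jm)) = (F tz).1 (l + 2 + jp) := by
        have h := (F tz).2.2 (l + 2 + jp)
        rwa [show l + 2 + jp + 1 = l + 2 + jm from by omega] at h
      have hfw : f s ((F tw).1 (l + 2 + jm)) = (F tw).1 (l + 2 + jp) := by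
        have h := (F tw).2.2 (l + 2 + jp)
        rwa [show l + 2 + jp + 1 = l + 2 + jm from by omega] at h
      have hfe : f s ((F tz).1 (l + 2 + jm)) = f s ((F tw).1 (l + 2 + jm)) := by
        rw [hfz, hfw, hprev]
      have hstr := f_straddle hs1 hfe hne
      have hcu : c s ∈ uIcc (A jm tz) (A jm tw) := by
        rw [Set.mem_uIcc]
        rcases hstr with ⟨h1, h2⟩ | ⟨h1, h2⟩
        · left; exact ⟨h1.le, h2.le⟩
        · right; exact ⟨h1.le, h2.le⟩
      obtain ⟨t', ht', hv'⟩ := intermediate_value_uIcc ((hAcont jm).continuousOn) hcu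
      have hAz : A jm tz ≠ c s := by
        rcases hstr with ⟨h1, _⟩ | ⟨_, h2⟩
        · exact ne_of_lt h1
        · exact ne_of_gt h2
      have hAw : A jm tw ≠ c s := by
        rcases hstr with ⟨_, h2⟩ | ⟨h1, _⟩
        · exact ne_of_gt h2
        · exact ne_of_lt h1
      have ht'z : t' ≠ tz := fun h => hAz (h ▸ hv')
      have ht'w : t' ≠ tw := fun h => hAw (h ▸ hv')
      have hIoo : t' ∈ Ioo t0 t1 := by
        rw [Set.mem_uIcc] at ht'
        rcases ht' with ⟨ha, hb⟩ | ⟨ha, hb⟩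
        · constructor
          · rcases lt_or_eq_of_le (le_trans htz.1 ha) with h | h
            · exact h
            · exact absurd (le_antisymm ha (h ▸ htz.1)).symm ht'z
          · rcases lt_or_eq_of_le (le_trans hb htw.2) with h | h
            · exact h
            · exact absurd (le_antisymm hb (h.symm ▸ htw.2)) ht'w
        · constructor
          · rcases lt_or_eq_of_le (le_trans htw.1 ha) with h | h
            · exact h
            · exact absurd (le_antisymm ha (h ▸ htw.1)).symm ht'w
          · rcases lt_or_eq_of_le (le_trans hb htz.2) with h | h
            · exact h
            · exact absurd (le_antisymm hb (h.symm ▸ htz.2)) ht'z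
      exact NOC jm t' hIoo hv'
    apply Subtype.ext
    funext i
    rcases le_or_gt (l + 2) i with h | h
    · have hh := hall (i - (l + 2))
      rwa [show l + 2 + (i - (l + 2)) = i from by omega] at hh
    · have h1 := coord_down (F tz) i ((l + 2) - i)
      have h2 := coord_down (F tw) i ((l + 2) - i)
      rw [show i + ((l + 2) - i) = l + 2 from by omega] at h1 h2
      rw [h1, h2, heq0]
  -- the homeomorphism
  have hγcomp : IsCompact γ := isCompact_Icc.image hFcont
  haveI : CompactSpace ↥γ := isCompact_iff_compactSpace.mp hγcomp
  set m0 : ↥γ → ↥(Icc (c s) (xs s)) := fun z => ⟨z.1.1 (l + 2), hzmem z.1 z.2⟩ with hm0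
  have hm0cont : Continuous m0 := Continuous.subtype_mk
    ((continuous_apply (l + 2)).comp (continuous_subtype_val.comp continuous_subtype_val)) _
  have hm0bij : Function.Bijective m0 := by
    constructor
    · intro z w h
      apply Subtype.ext
      exact hinj z.2 w.2 (congrArg Subtype.val h)
    · rintro ⟨u, hu⟩
      rw [← himg2] at hu
      obtain ⟨z, hz, hv⟩ := hu
      exact ⟨⟨z, hz⟩, Subtype.ext hv⟩
  set E0 : ↥γ ≃ ↥(Icc (c s) (xs s)) := Equiv.ofBijective m0 hm0bij with hE0
  have hE0c : Continuous (E0 : ↥γ → ↥(Icc (c s) (xs s))) := hm0cont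
  set E : ↥γ ≃ₜ ↥(Icc (c s) (xs s)) := Continuous.homeoOfEquivCompactToT2 (f := E0) hE0c with hE
  have hφ : ∀ z : Ihat s, z ∈ γ → z.1 l = s - s ^ 2 + s ^ 2 * z.1 (l + 2) :=
    fun z hz => phirel hs1 z l (hzmem z hz)
  refine ⟨γ, hγS, ⟨E.trans (iccHomeoI (c s) (xs s) hcx)⟩, ⟨?_, ordConnected_Icc,
    ⟨c s, ⟨le_rfl, hcx.le⟩, xs s, ⟨hcx.le, le_rfl⟩, hcx.ne⟩, E, fun z => rfl⟩, ?_⟩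
  · show Icc (c s) (xs s) ⊆ Icc 0 1
    exact Icc_subset_Icc hc0.le hx1.le
  · apply Set.Subset.antisymm
    · rintro _ ⟨z, hz, rfl⟩
      exact coord_mem z l
    · intro u hu
      have hvmem : (u + s ^ 2 - s) / s ^ 2 ∈ Icc (c s) (xs s) := by
        constructor
        · rw [le_div_iff₀ (by positivity)]
          have h : c s * s ^ 2 = s ^ 2 - s := by unfold c; field_simp
          nlinarith [hu.1]
        · rw [div_le_iff₀ (by positivity)]
          have h : xs s * s ^ 2 = s ^ 2 - s + 1 := by unfold xs c; field_simp; ring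
          nlinarith [hu.2]
      rw [← himg2] at hvmem
      obtain ⟨z, hz, hzv⟩ := hvmem
      refine ⟨z, hz, ?_⟩
      show z.1 l = u
      rw [hφ z hz, show z.1 (l + 2) = (u + s ^ 2 - s) / s ^ 2 from hzv]
      field_simp
      ring

lemma dsummable (a b : Ihat s) : Summable (fun i : ℕ => |a.1 i - b.1 i| / 2 ^ i) := by
  have hle : ∀ i : ℕ, |a.1 i - b.1 i| / 2 ^ i ≤ (1 / 2 : ℝ) ^ i := by
    intro i
    have ha := a.2.1 i
    have hb := b.2.1 i
    have habs : |a.1 i - b.1 i| ≤ 1 :=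
      abs_le.mpr ⟨by linarith [ha.1, hb.2], by linarith [ha.2, hb.1]⟩
    rw [one_div, inv_pow, ← one_div]
    gcongr
  exact Summable.of_nonneg_of_le (fun i => by positivity) hle
    (summable_geometric_of_lt_one (by norm_num) (by norm_num))

lemma dlb (a b : Ihat s) : |a.1 0 - b.1 0| ≤ dHat s a b := by
  have h := Summable.le_tsum (dsummable a b) 0 (fun j _ => by positivity)
  simpa [dHat] using h


end Basic

/-- a path-connected `S ⊆ Î` is dense iff for every `ℓ ≥ 0` there is a
flat closed arc `γ ⊆ S` with `π_ℓ(γ) = I`; moreover a dense such `S` is metrically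
infinite. -/
theorem dense_iff_full_flat_arcs (s : ℝ) (hs₁ : Real.sqrt 2 < s) (hs₂ : s < 2)
    (S : Set (Ihat s)) (hS : IsPathConnected S) :
    (Dense S ↔ ∀ ℓ : ℕ, ∃ γ : Set (Ihat s), γ ⊆ S ∧ IsFlatClosedArc s γ ∧
      (fun x : Ihat s => x.1 ℓ) '' γ = I) ∧
    (Dense S → MetricallyInfinite s S) := by
  have hsqnn : (0:ℝ) ≤ Real.sqrt 2 := Real.sqrt_nonneg 2
  have hsq2 : Real.sqrt 2 ^ 2 = 2 := Real.sq_sqrt (by norm_num)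
  have hss : 2 < s ^ 2 := by nlinarith
  have hs1 : 1 < s := by nlinarith
  have hcx := c_lt_xs hs1
  constructor
  · constructor
    · intro hD l
      obtain ⟨γ, hsub, hclosed, hflat, himg⟩ := master hs1 hs₂ hD hS l
      exact ⟨γ, hsub, ⟨hclosed, ⟨l + 2, Icc (c s) (xs s), hflat⟩⟩, himg⟩
    · intro hP
      rw [dense_iff_inter_open]
      intro U hU hUne
      obtain ⟨z, hz⟩ := hUne
      obtain ⟨V, hV, rfl⟩ := isOpen_induced_iff.mp hU
      obtain ⟨Fs, u, hu, hsub⟩ := isOpen_pi_iff.mp hV z.1 hz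
      set n := Fs.sup id with hn
      obtain ⟨γ, hγS, _, himg⟩ := hP n
      have hzn : z.1 n ∈ I := z.2.1 n
      rw [← himg] at hzn
      obtain ⟨w, hwγ, hwn⟩ := hzn
      refine ⟨w, ?_, hγS hwγ⟩
      show w.1 ∈ V
      apply hsub
      intro i hi
      have hin : i ≤ n := Finset.le_sup (f := id) hi
      have heq : w.1 i = z.1 i := by
        have h1 := coord_down w i (n - i)
        have h2 := coord_down z i (n - i)
        rw [show i + (n - i) = n from by omega] at h1 h2
        rw [h1, h2, show w.1 n = z.1 n from hwn]
      rw [heq]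
      exact (hu i hi).2
  · intro hD N hN
    obtain ⟨K, hvar⟩ := var_partition hs1 hs₂ hss
    set n : ℕ := ⌈N⌉₊ + 1 with hn
    have hNn : N < (n : ℝ) := by
      have := Nat.le_ceil N
      rw [hn]
      push_cast
      linarith
    set l : ℕ := K + n with hl
    obtain ⟨γ, hsub, hclosed, hflat, himg⟩ := master hs1 hs₂ hD hS l
    obtain ⟨k, w, hwmono, hwI, hwsum⟩ := hvar n
    rw [← hl] at hwsum
    obtain ⟨hJI, hJoc, hJnt, e, he⟩ := id hflat
    have hs0 := s_pos hs1
    have hvmem : ∀ i : ℕ, (w i + s ^ 2 - s) / s ^ 2 ∈ Icc (c s) (xs s) := by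
      intro i
      have hw := hwI i
      constructor
      · rw [le_div_iff₀ (by positivity)]
        have h : c s * s ^ 2 = s ^ 2 - s := by unfold c; field_simp
        nlinarith [hw.1]
      · rw [div_le_iff₀ (by positivity)]
        have h : xs s * s ^ 2 = s ^ 2 - s + 1 := by unfold xs c; field_simp; ring
        nlinarith [hw.2]
    set v : ℕ → ℝ := fun i => (w i + s ^ 2 - s) / s ^ 2 with hv
    set pt : ℕ → ↥γ := fun i => e.symm ⟨v i, hvmem i⟩ with hpt
    have hptc : ∀ i, ((pt i).1).1 (l + 2) = v i := by
      intro i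
      have h := he (pt i)
      rw [hpt, Homeomorph.apply_symm_apply] at h
      exact h.symm
    have hptl : ∀ i, ((pt i).1).1 l = w i := by
      intro i
      rw [phirel hs1 (pt i).1 l (by rw [hptc i]; exact hvmem i), hptc i]
      rw [hv]
      field_simp
      ring
    have hpt0 : ∀ i, ((pt i).1).1 0 = (f s)^[l] (w i) := by
      intro i
      have h := coord_down (pt i).1 0 l
      rw [show (0:ℕ) + l = l from by omega, hptl i] at h
      exact h
    set EE : ↥γ ≃ₜ ↥(Icc (0:ℝ) 1) := e.trans (iccHomeoI (c s) (xs s) hcx) with hEE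
    have hvmono : Monotone v := by
      intro i j hij
      show (w i + s ^ 2 - s) / s ^ 2 ≤ (w j + s ^ 2 - s) / s ^ 2
      have := hwmono hij
      gcongr
    have htmono : ∀ i j : ℕ, i ≤ j → EE (pt i) ≤ EE (pt j) := by
      intro i j hij
      rw [← Subtype.coe_le_coe]
      have hei : e (pt i) = ⟨v i, hvmem i⟩ := by rw [hpt, Homeomorph.apply_symm_apply]
      have hej : e (pt j) = ⟨v j, hvmem j⟩ := by rw [hpt, Homeomorph.apply_symm_apply]
      rw [hEE]
      rw [Homeomorph.trans_apply, Homeomorph.trans_apply, hei, hej]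
      rw [iccHomeoI_apply_coe, iccHomeoI_apply_coe]
      have h1 : (0:ℝ) < xs s - c s := by linarith
      have h2 : v i ≤ v j := hvmono hij
      show (v i - c s) / (xs s - c s) ≤ (v j - c s) / (xs s - c s)
      gcongr
    have hioa : InOrderAlong s γ k (fun i => (pt i).1) := by
      refine ⟨EE, fun i => EE (pt i), fun i j hij _ => htmono i j hij, fun i _ => ?_⟩
      rw [Homeomorph.symm_apply_apply]
    have hsum2 : (n : ℝ) ≤ ∑ i ∈ Finset.range k, dHat s ((pt i).1) ((pt (i+1)).1) := by
      refine le_trans hwsum (Finset.sum_le_sum ?_)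
      intro i _
      have h := dlb ((pt i).1) ((pt (i+1)).1)
      rw [hpt0 i, hpt0 (i+1)] at h
      rw [abs_sub_comm] at h
      exact h
    refine ⟨γ, hsub, ⟨hclosed, ⟨l + 2, Icc (c s) (xs s), hflat⟩⟩, ?_⟩
    have harc : ENNReal.ofReal (∑ i ∈ Finset.range k, dHat s ((pt i).1) ((pt (i+1)).1))
        ≤ arcLength s γ := by
      have h1 : ENNReal.ofReal (∑ i ∈ Finset.range k, dHat s ((pt i).1) ((pt (i+1)).1)) ≤
          ⨆ (_ : InOrderAlong s γ k (fun i => (pt i).1)),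
            ENNReal.ofReal (∑ i ∈ Finset.range k, dHat s ((pt i).1) ((pt (i+1)).1)) :=
        le_iSup (fun _ : InOrderAlong s γ k (fun i => (pt i).1) =>
          ENNReal.ofReal (∑ i ∈ Finset.range k, dHat s ((pt i).1) ((pt (i+1)).1))) hioa
      refine h1.trans ?_
      refine le_trans (le_iSup (fun p => ⨆ (_ : InOrderAlong s γ k p),
        ENNReal.ofReal (∑ i ∈ Finset.range k, dHat s (p i) (p (i+1)))) (fun i => (pt i).1)) ?_
      exact le_iSup (fun k' => ⨆ (p : ℕ → Ihat s) (_ : InOrderAlong s γ k' p),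
        ENNReal.ofReal (∑ i ∈ Finset.range k', dHat s (p i) (p (i+1)))) k
    refine lt_of_lt_of_le ?_ harc
    have hNpos : (0:ℝ) < ∑ i ∈ Finset.range k, dHat s ((pt i).1) ((pt (i+1)).1) := by
      have hn1 : (1:ℝ) ≤ (n:ℝ) := by
        rw [hn]; push_cast; linarith [Nat.zero_le ⌈N⌉₊]
      linarith
    rw [ENNReal.ofReal_lt_ofReal_iff hNpos]
    linarith


end Tent
end
end
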